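/- arXiv:1904.08733 — 2 statements merged into one kernel-verified Lean document; each statement's English description precedes it below -/
import Mathlib

section
/- Let (U_n) be a nested sequence of measurable subsets of Ω with μ(U_n) > 0 for all n and μ(U_n) → 0. Assume that for all sufficiently large integers L the limits α̂_ℓ(L) = lim_{n→∞} μ_{U_n}(τ_{U_n}^{ℓ-1} ≤ L) exist for every ℓ ≥ 1, set α̂_ℓ = lim_{L→∞} α̂_ℓ(L), and assume Σ_{ℓ=1}^∞ ℓ·α̂_ℓ < ∞. Define Z^{L,-}(x) = Σ_{i=0}^{L-1} 1_{U_n}(T^i x) and Z^{L,+}(x) = Σ_{i=L}^{2L} 1_{U_n}(T^i x). Then for every η > 0 there exists L₀ such that for every L ≥ L₀ there exists N such that for all n ≥ N, all integers ℓ ≥ 1, and all 0 ≤ k, k' < ℓ: |μ({Z^{L,-} = k} ∩ {Z^{L,+} = ℓ − k} ∩ T^{-L}U_n) − μ({Z^{L,-} = k'} ∩ {Z^{L,+} = ℓ − k'} ∩ T^{-L}U_n)| ≤ η·μ(U_n). -/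
open MeasureTheory Filter Topology
open scoped Classical ENNReal

/-- Number of visits of the orbit of `x` to `U` at times `1, …, j`. -/
noncomputable def visits {Ω : Type*} (T : Ω → Ω) (U : Set Ω) (x : Ω) (j : ℕ) : ℕ :=
  ((Finset.Icc 1 j).filter fun i => T^[i] x ∈ U).card

/-- The `ℓ`-th return time to `U` (with value `∞` if undefined, and `τ^0 = 0`). -/
noncomputable def tauIter {Ω : Type*} (T : Ω → Ω) (U : Set Ω) (ℓ : ℕ) (x : Ω) : ℕ∞ :=
  sInf ((fun j : ℕ => (j : ℕ∞)) '' {j : ℕ | ℓ ≤ visits T U x j})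

/-- The conditional probability `μ_U(A) = μ(A ∩ U)/μ(U)` as a real number. -/
noncomputable def condProb {Ω : Type*} [MeasurableSpace Ω] (μ : Measure Ω)
    (U A : Set Ω) : ℝ :=
  (μ (A ∩ U)).toReal / (μ U).toReal

/-- `Z^{L,-}(x) = Σ_{i=0}^{L-1} 1_U(T^i x)`. -/
noncomputable def Zminus {Ω : Type*} (T : Ω → Ω) (U : Set Ω) (L : ℕ) (x : Ω) : ℕ :=
  ((Finset.range L).filter fun i => T^[i] x ∈ U).card

/-- `Z^{L,+}(x) = Σ_{i=L}^{2L} 1_U(T^i x)`. -/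
noncomputable def Zplus {Ω : Type*} (T : Ω → Ω) (U : Set Ω) (L : ℕ) (x : Ω) : ℕ :=
  ((Finset.Icc L (2 * L)).filter fun i => T^[i] x ∈ U).card

section Basic

variable {Ω : Type*} {T : Ω → Ω} {U : Set Ω}

lemma visits_mono (x : Ω) {j j' : ℕ} (h : j ≤ j') : visits T U x j ≤ visits T U x j' :=
  Finset.card_le_card (Finset.filter_subset_filter _ (Finset.Icc_subset_Icc_right h))

lemma tauIter_le_iff (m t : ℕ) (x : Ω) :
    tauIter T U m x ≤ (t : ℕ∞) ↔ m ≤ visits T U x t := by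
  constructor
  · intro h
    by_contra hc
    push_neg at hc
    have h2 : ((t : ℕ∞) + 1) ≤ tauIter T U m x := by
      apply le_sInf
      rintro b ⟨j, hj, rfl⟩
      have htj : t + 1 ≤ j := by
        by_contra hj'
        push_neg at hj'
        exact absurd (le_trans hj (visits_mono x (by omega))) (not_le.mpr hc)
      show ((t : ℕ∞) + 1) ≤ (j : ℕ∞)
      exact_mod_cast htj
    have h3 := le_trans h2 h
    have : ((t:ℕ∞) + 1) = ((t+1 : ℕ) : ℕ∞) := by push_cast; ring
    rw [this] at h3
    exact absurd (Nat.cast_le.mp h3) (by omega)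
  · intro h
    exact sInf_le ⟨t, h, rfl⟩

/-- visits of a shifted point counted as visits of `x` in a shifted window. -/
lemma visits_shift (v s : ℕ) (x : Ω) :
    visits T U (T^[v] x) s
      = ((Finset.Icc (v + 1) (v + s)).filter fun i => T^[i] x ∈ U).card := by
  rw [show Finset.Icc (v + 1) (v + s) = (Finset.Icc 1 s).map (addLeftEmbedding v) from
    (Finset.map_add_left_Icc 1 s v).symm, Finset.filter_map, Finset.card_map]
  unfold visits
  congr 1
  apply Finset.filter_congr
  intro i _
  simp only [Function.comp_apply, addLeftEmbedding_apply]
  rw [show v + i = i + v from Nat.add_comm v i, Function.iterate_add_apply]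

end Basic

section Meas

variable {Ω : Type*} [MeasurableSpace Ω] {T : Ω → Ω} {U : Set Ω}
lemma meas_iter (hTm : Measurable T) (hU : MeasurableSet U) (i : ℕ) :
    MeasurableSet (T^[i] ⁻¹' U) := (hTm.iterate i) hU

lemma measurable_card_filter (hTm : Measurable T) (hU : MeasurableSet U) (s : Finset ℕ) :
    Measurable fun x => (s.filter fun i => T^[i] x ∈ U).card := by
  have : (fun x => (s.filter fun i => T^[i] x ∈ U).card)
      = fun x => ∑ i ∈ s, if T^[i] x ∈ U then 1 else 0 := by
    funext x; rw [Finset.card_filter]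
  rw [this]
  exact Finset.measurable_sum _ fun i _ =>
    Measurable.ite (meas_iter hTm hU i) measurable_const measurable_const

lemma measurable_visits (hTm : Measurable T) (hU : MeasurableSet U) (j : ℕ) :
    Measurable fun x => visits T U x j := measurable_card_filter hTm hU _

lemma measurable_Zminus (hTm : Measurable T) (hU : MeasurableSet U) (L : ℕ) :
    Measurable fun x => Zminus T U L x := measurable_card_filter hTm hU _

lemma measurable_Zplus (hTm : Measurable T) (hU : MeasurableSet U) (L : ℕ) :
    Measurable fun x => Zplus T U L x := measurable_card_filter hTm hU _

end Meas

/-! ### Patterns -/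

/-- The event that the visit pattern of `x` inside the window `W` is exactly `P`. -/
def pE {Ω : Type*} (T : Ω → Ω) (U : Set Ω) (P W : Finset ℕ) : Set Ω :=
  {x | ∀ i ∈ W, (T^[i] x ∈ U ↔ i ∈ P)}

/-- Patterns for the event `A_k`: `ℓ` visits in `[0,2L]`, a visit at `L`, `k` visits below `L`. -/
def pS (L ℓ k : ℕ) : Finset (Finset ℕ) :=
  ((Finset.Icc 0 (2 * L)).powerset).filter
    (fun P => P.card = ℓ ∧ L ∈ P ∧ (P.filter (· < L)).card = k)

/-- First element of `P` above `L`. -/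
noncomputable def gp (L : ℕ) (P : Finset ℕ) : ℕ := sInf {p : ℕ | p ∈ P ∧ L < p}

/-- Last element of `S` below `L`. -/
noncomputable def mb (L : ℕ) (S : Finset ℕ) : ℕ := sSup {s : ℕ | s ∈ S ∧ s < L}

noncomputable def core (L ℓ k : ℕ) : Finset (Finset ℕ) :=
  (pS L ℓ k).filter (fun P => ∀ p ∈ P, gp L P ≤ p + L)

noncomputable def good (L ℓ k : ℕ) : Finset (Finset ℕ) :=
  (pS L ℓ (k + 1)).filter (fun S => ∀ s ∈ S, s + (L - mb L S) ≤ 2 * L)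

noncomputable def up (L : ℕ) (S : Finset ℕ) : Finset ℕ := S.image (fun s => s + (L - mb L S))
noncomputable def down (L : ℕ) (P : Finset ℕ) : Finset ℕ := P.image (fun p => p - (gp L P - L))

section Pure

variable {L ℓ k : ℕ}

lemma pS_mem {P : Finset ℕ} (h : P ∈ pS L ℓ k) :
    P ⊆ Finset.Icc 0 (2 * L) ∧ P.card = ℓ ∧ L ∈ P ∧ (P.filter (· < L)).card = k := by
  simpa [pS, Finset.mem_filter, Finset.mem_powerset] using h

lemma gp_spec {P : Finset ℕ} (h : P ∈ pS L ℓ k) (hk : k + 2 ≤ ℓ) :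
    gp L P ∈ P ∧ L < gp L P ∧ (∀ p ∈ P, L < p → gp L P ≤ p) := by
  obtain ⟨hPW, hcard, hLP, hfilt⟩ := pS_mem h
  have hsplit := Finset.card_filter_add_card_filter_not (s := P) (p := (· < L))
  have hne : {p : ℕ | p ∈ P ∧ L < p}.Nonempty := by
    by_contra hcon
    push_neg at hcon
    have hsub : P.filter (fun p => ¬ p < L) ⊆ {L} := by
      intro p hp
      rw [Finset.mem_filter] at hp
      rw [Finset.mem_singleton]
      have h2 : ¬ L < p := fun hl => by
        have : p ∈ ({p : ℕ | p ∈ P ∧ L < p}) := ⟨hp.1, hl⟩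
        rw [hcon] at this
        exact this
      omega
    have := Finset.card_le_card hsub
    rw [Finset.card_singleton] at this
    omega
  have hmem := Nat.sInf_mem hne
  exact ⟨hmem.1, hmem.2, fun p hp hLp => Nat.sInf_le ⟨hp, hLp⟩⟩

lemma mb_spec {S : Finset ℕ} (h : S ∈ pS L ℓ (k + 1)) :
    mb L S ∈ S ∧ mb L S < L ∧ (∀ s ∈ S, s < L → s ≤ mb L S) := by
  obtain ⟨hSW, hcard, hLS, hfilt⟩ := pS_mem h
  have hbdd : BddAbove {s : ℕ | s ∈ S ∧ s < L} := ⟨L, fun s hs => hs.2.le⟩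
  have hne : {s : ℕ | s ∈ S ∧ s < L}.Nonempty := by
    have : (S.filter (· < L)).Nonempty := by
      rw [← Finset.card_pos, hfilt]; omega
    obtain ⟨s, hs⟩ := this
    rw [Finset.mem_filter] at hs
    exact ⟨s, hs⟩
  have hmem := Nat.sSup_mem hne hbdd
  exact ⟨hmem.1, hmem.2, fun s hs hsL => le_csSup hbdd ⟨hs, hsL⟩⟩

lemma up_core {S : Finset ℕ} (h : S ∈ good L ℓ k) (hk : k + 2 ≤ ℓ) :
    up L S ∈ core L ℓ k ∧ gp L (up L S) = L + (L - mb L S) := by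
  rw [good, Finset.mem_filter] at h
  obtain ⟨hS, hgood⟩ := h
  obtain ⟨hSW, hcard, hLS, hfilt⟩ := pS_mem hS
  obtain ⟨hmS, hmL, hmax⟩ := mb_spec hS
  have himg : ∀ {p : ℕ}, p ∈ up L S ↔ ∃ s ∈ S, s + (L - mb L S) = p := by
    intro p; rw [up, Finset.mem_image]
  have hLP : L ∈ up L S := himg.mpr ⟨mb L S, hmS, by omega⟩
  have hGP : L + (L - mb L S) ∈ up L S := himg.mpr ⟨L, hLS, rfl⟩
  have hgp : gp L (up L S) = L + (L - mb L S) := by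
    have hmem : L + (L - mb L S) ∈ {p : ℕ | p ∈ up L S ∧ L < p} := ⟨hGP, by omega⟩
    have hle := Nat.sInf_le hmem
    have hlb : ∀ p ∈ up L S, L < p → L + (L - mb L S) ≤ p := by
      intro p hp hLp
      obtain ⟨s, hs, rfl⟩ := himg.mp hp
      have hsL : ¬ s < L := fun hsl => by have := hmax s hs hsl; omega
      omega
    have hmemInf := Nat.sInf_mem ⟨_, hmem⟩
    exact le_antisymm hle (hlb _ hmemInf.1 hmemInf.2)
  have hcardP : (up L S).card = ℓ := by
    rw [up, Finset.card_image_of_injective _ (fun a b hab => by omega), hcard]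
  have hfiltP : ((up L S).filter (· < L)).card = k := by
    rw [up, Finset.filter_image]
    rw [Finset.card_image_of_injective _ (fun a b hab => by omega)]
    have heq : (S.filter fun s => s + (L - mb L S) < L) = (S.filter (· < L)).erase (mb L S) := by
      ext s
      simp only [Finset.mem_filter, Finset.mem_erase]
      constructor
      · rintro ⟨hsS, hlt⟩
        have h1 : s < mb L S := by omega
        exact ⟨by omega, hsS, by omega⟩
      · rintro ⟨hne, hsS, hsl⟩
        have := hmax s hsS hsl
        exact ⟨hsS, by omega⟩
    rw [heq, Finset.card_erase_of_mem (by rw [Finset.mem_filter]; exact ⟨hmS, hmL⟩), hfilt]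
    omega
  have hsubP : up L S ⊆ Finset.Icc 0 (2 * L) := by
    intro p hp
    obtain ⟨s, hs, rfl⟩ := himg.mp hp
    rw [Finset.mem_Icc]
    exact ⟨by omega, hgood s hs⟩
  refine ⟨?_, hgp⟩
  rw [core, Finset.mem_filter]
  constructor
  · rw [pS, Finset.mem_filter, Finset.mem_powerset]
    exact ⟨hsubP, hcardP, hLP, hfiltP⟩
  · intro p hp
    rw [hgp]
    obtain ⟨s, hs, rfl⟩ := himg.mp hp
    omega

lemma down_good {P : Finset ℕ} (h : P ∈ core L ℓ k) (hk : k + 2 ≤ ℓ) :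
    down L P ∈ good L ℓ k ∧ mb L (down L P) = L - (gp L P - L) := by
  rw [core, Finset.mem_filter] at h
  obtain ⟨hP, hcore⟩ := h
  obtain ⟨hPW, hcard, hLP, hfilt⟩ := pS_mem hP
  obtain ⟨hGP, hGL, hGmin⟩ := gp_spec hP hk
  have hG2L : gp L P ≤ 2 * L := (Finset.mem_Icc.mp (hPW hGP)).2
  have hL1 : 1 ≤ L := by omega
  have hge : ∀ p ∈ P, gp L P - L ≤ p := fun p hp => by have := hcore p hp; omega
  have himg : ∀ {q : ℕ}, q ∈ down L P ↔ ∃ p ∈ P, p - (gp L P - L) = q := by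
    intro q; rw [down, Finset.mem_image]
  have hinjOn : Set.InjOn (fun p => p - (gp L P - L)) ↑P := by
    intro a ha b hb hab
    have h1 := hge a (Finset.mem_coe.mp ha)
    have h2 := hge b (Finset.mem_coe.mp hb)
    simp only at hab
    omega
  have hLS : L ∈ down L P := himg.mpr ⟨gp L P, hGP, by omega⟩
  have hmS : L - (gp L P - L) ∈ down L P := himg.mpr ⟨L, hLP, rfl⟩
  have hmb : mb L (down L P) = L - (gp L P - L) := by
    have hbdd : BddAbove {s : ℕ | s ∈ down L P ∧ s < L} := ⟨L, fun s hs => hs.2.le⟩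
    have hmem : L - (gp L P - L) ∈ {s : ℕ | s ∈ down L P ∧ s < L} := ⟨hmS, by omega⟩
    have hle := le_csSup hbdd hmem
    have hub : ∀ s ∈ down L P, s < L → s ≤ L - (gp L P - L) := by
      intro q hq hqL
      obtain ⟨p, hp, rfl⟩ := himg.mp hq
      have hpL : ¬ L < p := fun hl => by have := hGmin p hp hl; omega
      omega
    have hsup := Nat.sSup_mem ⟨_, hmem⟩ hbdd
    exact le_antisymm (hub _ hsup.1 hsup.2) hle
  have hcardS : (down L P).card = ℓ := by
    rw [down, Finset.card_image_of_injOn hinjOn, hcard]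
  have hfiltS : ((down L P).filter (· < L)).card = k + 1 := by
    rw [down, Finset.filter_image]
    rw [Finset.card_image_of_injOn (Set.InjOn.mono (by intro a ha; exact (Finset.mem_filter.mp ha).1) hinjOn)]
    have heq : (P.filter fun p => p - (gp L P - L) < L) = insert L (P.filter (· < L)) := by
      ext p
      simp only [Finset.mem_filter, Finset.mem_insert]
      constructor
      · rintro ⟨hpP, hlt⟩
        have hpG : p < gp L P := by omega
        have hpL : ¬ L < p := fun hl => by have := hGmin p hpP hl; omega
        rcases Nat.lt_or_ge p L with h1 | h1
        · exact Or.inr ⟨hpP, h1⟩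
        · exact Or.inl (by omega)
      · rintro (rfl | ⟨hpP, hpL⟩)
        · exact ⟨hLP, by omega⟩
        · exact ⟨hpP, by omega⟩
    rw [heq, Finset.card_insert_of_notMem (by rw [Finset.mem_filter]; rintro ⟨-, hc⟩; omega), hfilt]
  have hsubS : down L P ⊆ Finset.Icc 0 (2 * L) := by
    intro q hq
    obtain ⟨p, hp, rfl⟩ := himg.mp hq
    have := (Finset.mem_Icc.mp (hPW hp)).2
    rw [Finset.mem_Icc]
    omega
  refine ⟨?_, hmb⟩
  rw [good, Finset.mem_filter]
  constructor
  · rw [pS, Finset.mem_filter, Finset.mem_powerset]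
    exact ⟨hsubS, hcardS, hLS, hfiltS⟩
  · intro q hq
    obtain ⟨p, hp, rfl⟩ := himg.mp hq
    rw [hmb]
    have h2 := (Finset.mem_Icc.mp (hPW hp)).2
    have h3 := hge p hp
    omega

lemma up_down {P : Finset ℕ} (h : P ∈ core L ℓ k) (hk : k + 2 ≤ ℓ) :
    up L (down L P) = P := by
  have hmb := (down_good h hk).2
  rw [core, Finset.mem_filter] at h
  obtain ⟨hP, hcore⟩ := h
  obtain ⟨hPW, hcard, hLP, hfilt⟩ := pS_mem hP
  obtain ⟨hGP, hGL, hGmin⟩ := gp_spec hP hk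
  have hG2L : gp L P ≤ 2 * L := (Finset.mem_Icc.mp (hPW hGP)).2
  have hge : ∀ p ∈ P, gp L P - L ≤ p := fun p hp => by have := hcore p hp; omega
  rw [up, hmb, down, Finset.image_image]
  have : ∀ p ∈ P, ((fun s => s + (L - (L - (gp L P - L)))) ∘ fun p => p - (gp L P - L)) p = p := by
    intro p hp
    have := hge p hp
    simp only [Function.comp_apply]
    omega
  rw [Finset.image_congr fun p hp => this p hp, Finset.image_id']

lemma down_up {S : Finset ℕ} (h : S ∈ good L ℓ k) (hk : k + 2 ≤ ℓ) :
    down L (up L S) = S := by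
  have hgp := (up_core h hk).2
  rw [good, Finset.mem_filter] at h
  obtain ⟨hS, hgood⟩ := h
  obtain ⟨hmS, hmL, hmax⟩ := mb_spec hS
  rw [down, hgp, up, Finset.image_image]
  have : ∀ s ∈ S, ((fun p => p - (L + (L - mb L S) - L)) ∘ fun s => s + (L - mb L S)) s = s := by
    intro s hs
    simp only [Function.comp_apply]
    omega
  rw [Finset.image_congr fun s hs => this s hs, Finset.image_id']

lemma core_zero {P : Finset ℕ} (h : P ∈ pS L ℓ 0) (hk : 2 ≤ ℓ) : P ∈ core L ℓ 0 := by
  obtain ⟨hPW, hcard, hLP, hfilt⟩ := pS_mem h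
  obtain ⟨hGP, hGL, hGmin⟩ := gp_spec h (by omega)
  have hG2L : gp L P ≤ 2 * L := (Finset.mem_Icc.mp (hPW hGP)).2
  rw [core, Finset.mem_filter]
  refine ⟨h, fun p hp => ?_⟩
  have hnotlt : ¬ p < L := by
    intro hlt
    have : p ∈ P.filter (· < L) := Finset.mem_filter.mpr ⟨hp, hlt⟩
    rw [Finset.card_eq_zero] at hfilt
    rw [hfilt] at this
    exact absurd this (Finset.notMem_empty p)
  omega

end Pure


/-- the event `A_k`. -/
def Aev {Ω : Type*} (T : Ω → Ω) (U : Set Ω) (L ℓ k : ℕ) : Set Ω :=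
  {x | Zminus T U L x = k} ∩ {x | Zplus T U L x = ℓ - k} ∩ T^[L] ⁻¹' U

def Rset {Ω : Type*} (T : Ω → Ω) (U : Set Ω) (L m : ℕ) : Set Ω :=
  {y | visits T U y L < m ∧ m ≤ visits T U y (2 * L)}

def anch {Ω : Type*} (T : Ω → Ω) (U : Set Ω) (L j : ℕ) (R : Set Ω) : Set Ω :=
  ⋃ v ∈ Finset.range L, T^[v] ⁻¹'
    (U ∩ {y | T^[L - v] y ∈ U ∧ visits T U y (L - v) = j} ∩ R)

section Incl

variable {Ω : Type*} {T : Ω → Ω} {U : Set Ω}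

lemma mem_anch {L j : ℕ} {R : Set Ω} {x : Ω} {v : ℕ} (hv : v < L) (h1 : T^[v] x ∈ U)
    (h2 : T^[L] x ∈ U) (h3 : visits T U (T^[v] x) (L - v) = j) (h4 : T^[v] x ∈ R) :
    x ∈ anch T U L j R := by
  have h5 : T^[L - v] (T^[v] x) = T^[L] x := by
    rw [← Function.iterate_add_apply]
    congr 1
    omega
  simp only [anch, Set.mem_iUnion, Finset.mem_range, Set.mem_preimage]
  exact ⟨v, hv, ⟨h1, by rw [h5]; exact h2, h3⟩, h4⟩

lemma hwin_of_pE {x : Ω} {P : Finset ℕ} {a b c d : ℕ}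
    (hx : x ∈ pE T U P (Finset.Icc a b)) (hac : a ≤ c) (hdb : d ≤ b) :
    (Finset.Icc c d).filter (fun i => T^[i] x ∈ U) = (Finset.Icc c d).filter (· ∈ P) := by
  apply Finset.filter_congr
  intro i hi
  rw [Finset.mem_Icc] at hi
  exact hx i (Finset.mem_Icc.mpr ⟨by omega, by omega⟩)

/-- count `P ∩ (v, L]` when `v` is the minimum of `P` and `v < L`. -/
lemma card_c1 {L ℓ k v : ℕ} {P : Finset ℕ} (hP : P ∈ pS L ℓ k) (hvP : v ∈ P)
    (hmin : ∀ p ∈ P, v ≤ p) (hvL : v < L) :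
    ((Finset.Icc (v + 1) L).filter (· ∈ P)).card = k := by
  obtain ⟨hPW, hcard, hLP, hfilt⟩ := pS_mem hP
  have heq : (Finset.Icc (v + 1) L).filter (· ∈ P) = insert L ((P.filter (· < L)).erase v) := by
    ext p
    simp only [Finset.mem_filter, Finset.mem_Icc, Finset.mem_insert, Finset.mem_erase]
    constructor
    · rintro ⟨⟨h1, h2⟩, h3⟩
      rcases eq_or_lt_of_le h2 with hpe | hlt
      · exact Or.inl hpe
      · exact Or.inr ⟨by omega, h3, hlt⟩
    · rintro (rfl | ⟨hne', hp, hlt⟩)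
      · exact ⟨⟨by omega, le_refl _⟩, hLP⟩
      · have := hmin p hp
        exact ⟨⟨by omega, by omega⟩, hp⟩
  have hvmem : v ∈ P.filter (· < L) := Finset.mem_filter.mpr ⟨hvP, hvL⟩
  have hk0 : 0 < k := by
    rw [← hfilt]
    exact Finset.card_pos.mpr ⟨v, hvmem⟩
  rw [heq, Finset.card_insert_of_notMem
      (by rw [Finset.mem_erase, Finset.mem_filter]; rintro ⟨-, -, hc⟩; omega),
    Finset.card_erase_of_mem hvmem, hfilt]
  omega

lemma incl_I1 {L ℓ k : ℕ} {P : Finset ℕ} (hk2 : k + 2 ≤ ℓ)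
    (hP : P ∈ pS L ℓ k) (hnc : P ∉ core L ℓ k) :
    pE T U P (Finset.Icc 0 (2 * L)) ⊆ anch T U L k (Rset T U L (ℓ - 1)) := by
  obtain ⟨hPW, hcard, hLP, hfilt⟩ := pS_mem hP
  obtain ⟨hGP, hGL, hGmin⟩ := gp_spec hP hk2
  have hG2L : gp L P ≤ 2 * L := (Finset.mem_Icc.mp (hPW hGP)).2
  have hk1 : 1 ≤ k := by
    rcases Nat.eq_zero_or_pos k with rfl | h
    · exact absurd (core_zero hP (by omega)) hnc
    · exact h
  have hex : ∃ p0 ∈ P, p0 + L < gp L P := by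
    by_contra hcon
    push_neg at hcon
    exact hnc (by rw [core, Finset.mem_filter]; exact ⟨hP, fun p hp => hcon p hp⟩)
  obtain ⟨p0, hp0, hp0lt⟩ := hex
  have hne : P.Nonempty := ⟨p0, hp0⟩
  set v := P.min' hne with hv
  have hvP : v ∈ P := P.min'_mem hne
  have hmin : ∀ p ∈ P, v ≤ p := fun p hp => P.min'_le p hp
  have hvg : v + L < gp L P := by have := hmin p0 hp0; omega
  have hvL : v < L := by omega
  intro x hx
  have hxv : T^[v] x ∈ U := (hx v (hPW hvP)).mpr hvP
  have hxL : T^[L] x ∈ U := (hx L (hPW hLP)).mpr hLP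
  have hc1 := card_c1 hP hvP hmin hvL
  have hcount1 : visits T U (T^[v] x) (L - v) = k := by
    rw [visits_shift, hwin_of_pE hx (by omega) (by omega), show v + (L - v) = L by omega, hc1]
  have hcount2 : visits T U (T^[v] x) L < ℓ - 1 := by
    rw [visits_shift, hwin_of_pE hx (by omega) (by omega)]
    have hsub : (Finset.Icc (v + 1) (v + L)).filter (· ∈ P)
        ⊆ (Finset.Icc (v + 1) L).filter (· ∈ P) := by
      intro p hp
      simp only [Finset.mem_filter, Finset.mem_Icc] at hp ⊢
      have : ¬ L < p := fun hl => by have := hGmin p hp.2 hl; omega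
      exact ⟨⟨hp.1.1, by omega⟩, hp.2⟩
    have := Finset.card_le_card hsub
    rw [hc1] at this
    omega
  have hcount3 : ℓ - 1 ≤ visits T U (T^[v] x) (2 * L) := by
    rw [visits_shift]
    have hsub : P.erase v ⊆ (Finset.Icc (v + 1) (v + 2 * L)).filter (fun i => T^[i] x ∈ U) := by
      intro p hp
      rw [Finset.mem_erase] at hp
      have h1 := hmin p hp.2
      have h2 := (Finset.mem_Icc.mp (hPW hp.2)).2
      simp only [Finset.mem_filter, Finset.mem_Icc]
      exact ⟨⟨by omega, by omega⟩, (hx p (hPW hp.2)).mpr hp.2⟩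
    have := Finset.card_le_card hsub
    rw [Finset.card_erase_of_mem hvP, hcard] at this
    omega
  exact mem_anch hvL hxv hxL hcount1 ⟨hcount2, hcount3⟩

lemma incl_I2 {L ℓ k : ℕ} {S : Finset ℕ} (hk2 : k + 2 ≤ ℓ)
    (hS : S ∈ pS L ℓ (k + 1)) (hng : S ∉ good L ℓ k) :
    pE T U S (Finset.Icc 0 (2 * L)) ⊆ anch T U L 1 (Rset T U L (ℓ - k - 1)) := by
  obtain ⟨hSW, hcard, hLS, hfilt⟩ := pS_mem hS
  obtain ⟨hmS, hmL, hmax⟩ := mb_spec hS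
  have hex : ∃ s0 ∈ S, ¬ s0 + (L - mb L S) ≤ 2 * L := by
    by_contra hcon
    push_neg at hcon
    exact hng (by rw [good, Finset.mem_filter]; exact ⟨hS, fun s hs => hcon s hs⟩)
  obtain ⟨s0, hs0, hs0gt⟩ := hex
  set v := mb L S with hv
  have hsplit := Finset.card_filter_add_card_filter_not (s := S) (p := (· < L))
  have hcard2 : (S.filter (fun s => ¬ s < L)).card = ℓ - (k + 1) := by omega
  have hs0big : v + L < s0 := by omega
  have hs0L : ¬ s0 < L := by omega
  intro x hx
  have hxv : T^[v] x ∈ U := (hx v (hSW hmS)).mpr hmS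
  have hxL : T^[L] x ∈ U := (hx L (hSW hLS)).mpr hLS
  have hcount1 : visits T U (T^[v] x) (L - v) = 1 := by
    rw [visits_shift, hwin_of_pE hx (by omega) (by omega), show v + (L - v) = L by omega]
    have heq : (Finset.Icc (v + 1) L).filter (· ∈ S) = {L} := by
      ext p
      simp only [Finset.mem_filter, Finset.mem_Icc, Finset.mem_singleton]
      constructor
      · rintro ⟨⟨h1, h2⟩, h3⟩
        by_contra hne
        have hpl : p < L := by omega
        have := hmax p h3 hpl
        omega
      · rintro rfl
        exact ⟨⟨by omega, le_refl _⟩, hLS⟩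
    rw [heq, Finset.card_singleton]
  have hcount2 : visits T U (T^[v] x) L < ℓ - k - 1 := by
    rw [visits_shift, hwin_of_pE hx (by omega) (by omega)]
    have hsub : (Finset.Icc (v + 1) (v + L)).filter (· ∈ S)
        ⊆ (S.filter (fun s => ¬ s < L)).erase s0 := by
      intro p hp
      simp only [Finset.mem_filter, Finset.mem_Icc] at hp
      rw [Finset.mem_erase, Finset.mem_filter]
      have hpL : ¬ p < L := fun hpl => by have := hmax p hp.2 hpl; omega
      exact ⟨by omega, hp.2, hpL⟩
    have h1 := Finset.card_le_card hsub
    rw [Finset.card_erase_of_mem (Finset.mem_filter.mpr ⟨hs0, hs0L⟩), hcard2] at h1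
    have hkk : k + 1 < ℓ := by omega
    have hgood0 : 0 < ℓ - (k + 1) := by
      rw [← hcard2]
      exact Finset.card_pos.mpr ⟨s0, Finset.mem_filter.mpr ⟨hs0, hs0L⟩⟩
    omega
  have hcount3 : ℓ - k - 1 ≤ visits T U (T^[v] x) (2 * L) := by
    rw [visits_shift]
    have hsub : S.filter (fun s => ¬ s < L)
        ⊆ (Finset.Icc (v + 1) (v + 2 * L)).filter (fun i => T^[i] x ∈ U) := by
      intro p hp
      rw [Finset.mem_filter] at hp
      have h2 := (Finset.mem_Icc.mp (hSW hp.1)).2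
      simp only [Finset.mem_filter, Finset.mem_Icc]
      exact ⟨⟨by omega, by omega⟩, (hx p (hSW hp.1)).mpr hp.1⟩
    have := Finset.card_le_card hsub
    rw [hcard2] at this
    omega
  exact mem_anch hmL hxv hxL hcount1 ⟨hcount2, hcount3⟩

lemma incl_I3a {L ℓ k : ℕ} {P : Finset ℕ} (hk2 : k + 2 ≤ ℓ) (hP : P ∈ core L ℓ k) :
    pE T U P (Finset.Icc (gp L P - L) (2 * L)) \ pE T U P (Finset.Icc 0 (2 * L))
      ⊆ anch T U L (k + 1) (Rset T U L ℓ) := by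
  rw [core, Finset.mem_filter] at hP
  obtain ⟨hP1, hcore⟩ := hP
  obtain ⟨hPW, hcard, hLP, hfilt⟩ := pS_mem hP1
  obtain ⟨hGP, hGL, hGmin⟩ := gp_spec hP1 hk2
  have hG2L : gp L P ≤ 2 * L := (Finset.mem_Icc.mp (hPW hGP)).2
  set g := gp L P - L with hg
  have hg1 : 1 ≤ g := by omega
  have hgL : g ≤ L := by omega
  have hge : ∀ p ∈ P, g ≤ p := fun p hp => by have := hcore p hp; omega
  rintro x ⟨hx, hnx⟩
  -- there is an extra visit below g
  have hex : ∃ i, i < g ∧ T^[i] x ∈ U := by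
    simp only [pE, Set.mem_setOf_eq, not_forall] at hnx
    obtain ⟨i, hiW, hiff⟩ := hnx
    rw [Finset.mem_Icc] at hiW
    rcases Nat.lt_or_ge i g with hig | hig
    · refine ⟨i, hig, ?_⟩
      by_contra hvis
      have hiP : i ∉ P := fun hiP => by have := hge i hiP; omega
      exact hiff (iff_of_false hvis hiP)
    · exact absurd (hx i (Finset.mem_Icc.mpr ⟨hig, hiW.2⟩)) hiff
  have hBne : ((Finset.range g).filter (fun i => T^[i] x ∈ U)).Nonempty := by
    obtain ⟨i, hig, hvis⟩ := hex
    exact ⟨i, Finset.mem_filter.mpr ⟨Finset.mem_range.mpr hig, hvis⟩⟩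
  set v := ((Finset.range g).filter (fun i => T^[i] x ∈ U)).max' hBne with hvdef
  have hvmem := Finset.max'_mem _ hBne
  rw [Finset.mem_filter, Finset.mem_range] at hvmem
  obtain ⟨hvg, hxv⟩ := hvmem
  have hvmax : ∀ i, i < g → T^[i] x ∈ U → i ≤ v := fun i hig hvis =>
    Finset.le_max' _ i (Finset.mem_filter.mpr ⟨Finset.mem_range.mpr hig, hvis⟩)
  have hvL : v < L := by omega
  have hxL : T^[L] x ∈ U := (hx L (Finset.mem_Icc.mpr ⟨hgL, by omega⟩)).mpr hLP
  -- no visits strictly between v and g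
  have hnovis : ∀ i, v < i → i < g → ¬ T^[i] x ∈ U := fun i h1 h2 hvis => by
    have := hvmax i h2 hvis
    omega
  -- filter description on [v+1, d] for d ≤ 2L
  have hwin2 : ∀ {d : ℕ}, d ≤ 2 * L → (Finset.Icc (v + 1) d).filter (fun i => T^[i] x ∈ U)
      = (Finset.Icc g d).filter (· ∈ P) := by
    intro d hd
    ext i
    simp only [Finset.mem_filter, Finset.mem_Icc]
    constructor
    · rintro ⟨⟨h1, h2⟩, h3⟩
      have hig : g ≤ i := by
        by_contra hc
        exact hnovis i (by omega) (by omega) h3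
      exact ⟨⟨hig, h2⟩, (hx i (Finset.mem_Icc.mpr ⟨hig, by omega⟩)).mp h3⟩
    · rintro ⟨⟨h1, h2⟩, h3⟩
      exact ⟨⟨by omega, h2⟩, (hx i (Finset.mem_Icc.mpr ⟨h1, by omega⟩)).mpr h3⟩
  -- card of P ∩ [g, L] is k+1
  have hcP : ((Finset.Icc g L).filter (· ∈ P)).card = k + 1 := by
    have heq : (Finset.Icc g L).filter (· ∈ P) = insert L (P.filter (· < L)) := by
      ext p
      simp only [Finset.mem_filter, Finset.mem_Icc, Finset.mem_insert]
      constructor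
      · rintro ⟨⟨h1, h2⟩, h3⟩
        rcases eq_or_lt_of_le h2 with hpe | hlt
        · exact Or.inl hpe
        · exact Or.inr ⟨h3, hlt⟩
      · rintro (rfl | ⟨hp, hlt⟩)
        · exact ⟨⟨hgL, le_refl _⟩, hLP⟩
        · exact ⟨⟨hge p hp, by omega⟩, hp⟩
    rw [heq, Finset.card_insert_of_notMem
        (by rw [Finset.mem_filter]; rintro ⟨-, hc⟩; omega), hfilt]
  have hcount1 : visits T U (T^[v] x) (L - v) = k + 1 := by
    rw [visits_shift, show v + (L - v) = L by omega, hwin2 (by omega), hcP]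
  have hcount2 : visits T U (T^[v] x) L < ℓ := by
    rw [visits_shift, hwin2 (by omega)]
    have hsub : (Finset.Icc g (v + L)).filter (· ∈ P) ⊆ (Finset.Icc g L).filter (· ∈ P) := by
      intro p hp
      simp only [Finset.mem_filter, Finset.mem_Icc] at hp ⊢
      have : ¬ L < p := fun hl => by have := hGmin p hp.2 hl; omega
      exact ⟨⟨hp.1.1, by omega⟩, hp.2⟩
    have := Finset.card_le_card hsub
    rw [hcP] at this
    omega
  have hcount3 : ℓ ≤ visits T U (T^[v] x) (2 * L) := by
    rw [visits_shift]
    have hsub : P ⊆ (Finset.Icc (v + 1) (v + 2 * L)).filter (fun i => T^[i] x ∈ U) := by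
      intro p hp
      have h2 := (Finset.mem_Icc.mp (hPW hp)).2
      have h3 := hge p hp
      simp only [Finset.mem_filter, Finset.mem_Icc]
      exact ⟨⟨by omega, by omega⟩, (hx p (Finset.mem_Icc.mpr ⟨h3, h2⟩)).mpr hp⟩
    have := Finset.card_le_card hsub
    rw [hcard] at this
    omega
  exact mem_anch hvL hxv hxL hcount1 ⟨hcount2, hcount3⟩

lemma incl_I3b {L ℓ k : ℕ} {P : Finset ℕ} (hk2 : k + 2 ≤ ℓ) (hP : P ∈ core L ℓ k) :
    pE T U P (Finset.Icc (gp L P - L) (2 * L))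
        \ pE T U P (Finset.Icc (gp L P - L) (2 * L + (gp L P - L)))
      ⊆ T^[L] ⁻¹' (U ∩ Rset T U L (ℓ - k)) := by
  rw [core, Finset.mem_filter] at hP
  obtain ⟨hP1, hcore⟩ := hP
  obtain ⟨hPW, hcard, hLP, hfilt⟩ := pS_mem hP1
  obtain ⟨hGP, hGL, hGmin⟩ := gp_spec hP1 hk2
  have hG2L : gp L P ≤ 2 * L := (Finset.mem_Icc.mp (hPW hGP)).2
  set g := gp L P - L with hg
  have hg1 : 1 ≤ g := by omega
  have hgL : g ≤ L := by omega
  have hge : ∀ p ∈ P, g ≤ p := fun p hp => by have := hcore p hp; omega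
  rintro x ⟨hx, hnx⟩
  have hex : ∃ i, 2 * L < i ∧ i ≤ 2 * L + g ∧ T^[i] x ∈ U := by
    simp only [pE, Set.mem_setOf_eq, not_forall] at hnx
    obtain ⟨i, hiW, hiff⟩ := hnx
    rw [Finset.mem_Icc] at hiW
    rcases Nat.lt_or_ge (2 * L) i with hig | hig
    · refine ⟨i, hig, hiW.2, ?_⟩
      by_contra hvis
      have hiP : i ∉ P := fun hiP => by have := (Finset.mem_Icc.mp (hPW hiP)).2; omega
      exact hiff (iff_of_false hvis hiP)
    · exact absurd (hx i (Finset.mem_Icc.mpr ⟨hiW.1, hig⟩)) hiff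
  obtain ⟨i, hi1, hi2, hivis⟩ := hex
  have hxL : T^[L] x ∈ U := (hx L (Finset.mem_Icc.mpr ⟨hgL, by omega⟩)).mpr hLP
  have hcPup : ((Finset.Icc (L + 1) (2 * L)).filter (· ∈ P)).card = ℓ - k - 1 := by
    have heq : (Finset.Icc (L + 1) (2 * L)).filter (· ∈ P) = (P.filter (fun p => ¬ p < L)).erase L := by
      ext p
      simp only [Finset.mem_filter, Finset.mem_Icc, Finset.mem_erase]
      constructor
      · rintro ⟨⟨h1, h2⟩, h3⟩
        exact ⟨by omega, h3, by omega⟩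
      · rintro ⟨hne, hp, hnl⟩
        have h2 := (Finset.mem_Icc.mp (hPW hp)).2
        exact ⟨⟨by omega, h2⟩, hp⟩
    have hsplit := Finset.card_filter_add_card_filter_not (s := P) (p := (· < L))
    rw [heq, Finset.card_erase_of_mem (Finset.mem_filter.mpr ⟨hLP, by omega⟩)]
    rw [hfilt, hcard] at hsplit
    omega
  have hwinL : (Finset.Icc (L + 1) (2 * L)).filter (fun j => T^[j] x ∈ U)
      = (Finset.Icc (L + 1) (2 * L)).filter (· ∈ P) :=
    hwin_of_pE hx (by omega) (by omega)
  have hcount2 : visits T U (T^[L] x) L < ℓ - k := by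
    rw [visits_shift, show L + L = 2 * L by omega, hwinL, hcPup]
    omega
  have hcount3 : ℓ - k ≤ visits T U (T^[L] x) (2 * L) := by
    rw [visits_shift]
    have hsub : insert i ((Finset.Icc (L + 1) (2 * L)).filter (fun j => T^[j] x ∈ U))
        ⊆ (Finset.Icc (L + 1) (L + 2 * L)).filter (fun j => T^[j] x ∈ U) := by
      intro p hp
      rw [Finset.mem_insert] at hp
      rcases hp with rfl | hp
      · simp only [Finset.mem_filter, Finset.mem_Icc]
        exact ⟨⟨by omega, by omega⟩, hivis⟩
      · simp only [Finset.mem_filter, Finset.mem_Icc] at hp ⊢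
        exact ⟨⟨hp.1.1, by omega⟩, hp.2⟩
    have hle := Finset.card_le_card hsub
    rw [Finset.card_insert_of_notMem
        (by simp only [Finset.mem_filter, Finset.mem_Icc]; rintro ⟨⟨-, hc⟩, -⟩; omega)] at hle
    rw [hwinL, hcPup] at hle
    omega
  exact ⟨hxL, hcount2, hcount3⟩

lemma incl_I4 {L ℓ k : ℕ} {P : Finset ℕ} (hl : 1 ≤ ℓ) (hk : k < ℓ) (hk1 : 1 ≤ k)
    (hP : P ∈ pS L ℓ k) :
    pE T U P (Finset.Icc 0 (2 * L)) ⊆ anch T U L k {y | ℓ - 1 ≤ visits T U y (2 * L)} := by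
  obtain ⟨hPW, hcard, hLP, hfilt⟩ := pS_mem hP
  have hne : P.Nonempty := ⟨L, hLP⟩
  set v := P.min' hne with hv
  have hvP : v ∈ P := P.min'_mem hne
  have hmin : ∀ p ∈ P, v ≤ p := fun p hp => P.min'_le p hp
  have hvL : v < L := by
    have hpos : (P.filter (· < L)).Nonempty := by
      rw [← Finset.card_pos, hfilt]; omega
    obtain ⟨p, hp⟩ := hpos
    rw [Finset.mem_filter] at hp
    have := hmin p hp.1
    omega
  intro x hx
  have hxv : T^[v] x ∈ U := (hx v (hPW hvP)).mpr hvP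
  have hxL : T^[L] x ∈ U := (hx L (hPW hLP)).mpr hLP
  have hc1 := card_c1 hP hvP hmin hvL
  have hcount1 : visits T U (T^[v] x) (L - v) = k := by
    rw [visits_shift, hwin_of_pE hx (by omega) (by omega), show v + (L - v) = L by omega, hc1]
  have hcount3 : ℓ - 1 ≤ visits T U (T^[v] x) (2 * L) := by
    rw [visits_shift]
    have hsub : P.erase v ⊆ (Finset.Icc (v + 1) (v + 2 * L)).filter (fun i => T^[i] x ∈ U) := by
      intro p hp
      rw [Finset.mem_erase] at hp
      have h1 := hmin p hp.2
      have h2 := (Finset.mem_Icc.mp (hPW hp.2)).2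
      simp only [Finset.mem_filter, Finset.mem_Icc]
      exact ⟨⟨by omega, by omega⟩, (hx p (hPW hp.2)).mpr hp.2⟩
    have := Finset.card_le_card hsub
    rw [Finset.card_erase_of_mem hvP, hcard] at this
    omega
  exact mem_anch hvL hxv hxL hcount1 hcount3

lemma incl_I4zero {L ℓ : ℕ} {P : Finset ℕ} (hl : 1 ≤ ℓ) (hP : P ∈ pS L ℓ 0) :
    pE T U P (Finset.Icc 0 (2 * L)) ⊆ T^[L] ⁻¹' (U ∩ {y | ℓ - 1 ≤ visits T U y L}) := by
  obtain ⟨hPW, hcard, hLP, hfilt⟩ := pS_mem hP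
  intro x hx
  have hxL : T^[L] x ∈ U := (hx L (hPW hLP)).mpr hLP
  have hcount : ℓ - 1 ≤ visits T U (T^[L] x) L := by
    rw [visits_shift, hwin_of_pE hx (by omega) (by omega)]
    have hsub : P.erase L ⊆ (Finset.Icc (L + 1) (L + L)).filter (· ∈ P) := by
      intro p hp
      rw [Finset.mem_erase] at hp
      have h2 := (Finset.mem_Icc.mp (hPW hp.2)).2
      have hnl : ¬ p < L := by
        intro hc
        have : p ∈ P.filter (· < L) := Finset.mem_filter.mpr ⟨hp.2, hc⟩
        rw [Finset.card_eq_zero] at hfilt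
        rw [hfilt] at this
        exact absurd this (Finset.notMem_empty p)
      simp only [Finset.mem_filter, Finset.mem_Icc]
      exact ⟨⟨by omega, by omega⟩, hp.2⟩
    have := Finset.card_le_card hsub
    rw [Finset.card_erase_of_mem hLP, hcard] at this
    omega
  exact ⟨hxL, hcount⟩

lemma core_pE_unique {L ℓ k : ℕ} {P P' : Finset ℕ} (hk2 : k + 2 ≤ ℓ)
    (hP : P ∈ core L ℓ k) (hP' : P' ∈ core L ℓ k) {x : Ω}
    (hx : x ∈ pE T U P (Finset.Icc (gp L P - L) (2 * L)))
    (hx' : x ∈ pE T U P' (Finset.Icc (gp L P' - L) (2 * L))) : P = P' := by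
  have key : ∀ {Q Q' : Finset ℕ}, Q ∈ core L ℓ k → Q' ∈ core L ℓ k →
      x ∈ pE T U Q (Finset.Icc (gp L Q - L) (2 * L)) →
      x ∈ pE T U Q' (Finset.Icc (gp L Q' - L) (2 * L)) →
      gp L Q - L ≤ gp L Q' - L → Q' ⊆ Q := by
    intro Q Q' hQ hQ' hxQ hxQ' hle q hq
    rw [core, Finset.mem_filter] at hQ hQ'
    have hgeQ' : ∀ p ∈ Q', gp L Q' - L ≤ p := fun p hp => by have := hQ'.2 p hp; omega
    have hsubQ' := (pS_mem hQ'.1).1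
    have h2L : q ≤ 2 * L := (Finset.mem_Icc.mp (hsubQ' hq)).2
    have hvis : T^[q] x ∈ U := (hxQ' q (Finset.mem_Icc.mpr ⟨hgeQ' q hq, h2L⟩)).mpr hq
    exact (hxQ q (Finset.mem_Icc.mpr ⟨by have := hgeQ' q hq; omega, h2L⟩)).mp hvis
  have hcP : P.card = ℓ := (pS_mem (Finset.mem_filter.mp (by rwa [core] at hP)).1).2.1
  have hcP' : P'.card = ℓ := (pS_mem (Finset.mem_filter.mp (by rwa [core] at hP')).1).2.1
  rcases le_total (gp L P - L) (gp L P' - L) with h | h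
  · exact (Finset.eq_of_subset_of_card_le (key hP hP' hx hx' h) (by omega)).symm
  · exact Finset.eq_of_subset_of_card_le (key hP' hP hx' hx h) (by omega)

end Incl

section Main

variable {Ω : Type*} [MeasurableSpace Ω] {μ : Measure Ω} [IsProbabilityMeasure μ]
variable {T : Ω → Ω} {U : Set Ω}

lemma measurableSet_pE (hTm : Measurable T) (hU : MeasurableSet U) (P W : Finset ℕ) :
    MeasurableSet (pE T U P W) := by
  have hrw : pE T U P W = ⋂ i ∈ (W : Set ℕ), {x | T^[i] x ∈ U ↔ i ∈ P} := by
    ext x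
    simp [pE, Set.mem_iInter]
  rw [hrw]
  apply MeasurableSet.biInter (Set.to_countable _)
  intro i _
  by_cases hP : i ∈ P
  · have : {x | T^[i] x ∈ U ↔ i ∈ P} = T^[i] ⁻¹' U := by ext x; simp [hP]
    rw [this]; exact meas_iter hTm hU i
  · have : {x | T^[i] x ∈ U ↔ i ∈ P} = (T^[i] ⁻¹' U)ᶜ := by ext x; simp [hP]
    rw [this]; exact (meas_iter hTm hU i).compl

lemma measurableSet_Rset (hTm : Measurable T) (hU : MeasurableSet U) (L m : ℕ) :
    MeasurableSet (Rset T U L m) := by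
  have h1 := measurable_visits hTm hU L (Ω := Ω)
  have h2 := measurable_visits hTm hU (2 * L) (Ω := Ω)
  exact ((h1 (MeasurableSet.of_discrete (s := Set.Iio m)))).inter
    (h2 (MeasurableSet.of_discrete (s := Set.Ici m)))

/-- the partition of `A_k` into patterns. -/
lemma Aev_eq_biUnion (L ℓ k : ℕ) (hk : k < ℓ) :
    Aev T U L ℓ k = ⋃ P ∈ pS L ℓ k, pE T U P (Finset.Icc 0 (2 * L)) := by
  ext x
  simp only [Aev, Set.mem_inter_iff, Set.mem_setOf_eq, Set.mem_preimage, Set.mem_iUnion]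
  set V := (Finset.Icc 0 (2 * L)).filter (fun i => T^[i] x ∈ U) with hV
  have hsplit : (V.filter (· < L)).card + (V.filter (fun i => ¬ i < L)).card = V.card :=
    Finset.card_filter_add_card_filter_not _
  have hm : V.filter (· < L) = (Finset.range L).filter (fun i => T^[i] x ∈ U) := by
    ext i
    simp only [hV, Finset.filter_filter, Finset.mem_filter, Finset.mem_Icc, Finset.mem_range]
    constructor
    · rintro ⟨⟨h1, h2⟩, h3, h4⟩; exact ⟨h4, h3⟩
    · rintro ⟨h1, h2⟩; exact ⟨⟨by omega, by omega⟩, h2, h1⟩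
  have hp : V.filter (fun i => ¬ i < L) = (Finset.Icc L (2 * L)).filter (fun i => T^[i] x ∈ U) := by
    ext i
    simp only [hV, Finset.filter_filter, Finset.mem_filter, Finset.mem_Icc]
    constructor
    · rintro ⟨⟨h1, h2⟩, h3, h4⟩; exact ⟨⟨by omega, h2⟩, h3⟩
    · rintro ⟨⟨h1, h2⟩, h3⟩; exact ⟨⟨by omega, h2⟩, h3, by omega⟩
  constructor
  · rintro ⟨⟨hZm, hZp⟩, hLU⟩
    simp only [Zminus] at hZm
    simp only [Zplus] at hZp
    refine ⟨V, ?_, ?_⟩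
    · simp only [pS, Finset.mem_filter, Finset.mem_powerset]
      refine ⟨Finset.filter_subset _ _, ?_, ?_, ?_⟩
      · rw [← hsplit, hm, hp, hZm, hZp]; omega
      · rw [hV, Finset.mem_filter, Finset.mem_Icc]; exact ⟨⟨by omega, by omega⟩, hLU⟩
      · rw [hm]; exact hZm
    · intro i hi
      simp only [hV, Finset.mem_filter, hi, true_and]
  · rintro ⟨P, hP, hx⟩
    obtain ⟨hPW, hcard, hLP, hfilt⟩ := pS_mem hP
    have hVP : V = P := by
      ext i
      simp only [hV, Finset.mem_filter]
      constructor
      · rintro ⟨hiW, hvis⟩; exact (hx i hiW).mp hvis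
      · intro hiP; exact ⟨hPW hiP, (hx i (hPW hiP)).mpr hiP⟩
    have h1 : Zminus T U L x = k := by
      show ((Finset.range L).filter (fun i => T^[i] x ∈ U)).card = k
      rw [← hm, hVP, hfilt]
    have h2 : Zplus T U L x = ℓ - k := by
      show ((Finset.Icc L (2 * L)).filter (fun i => T^[i] x ∈ U)).card = ℓ - k
      rw [← hp]
      have h5 := hsplit
      rw [hVP, hfilt, hcard] at h5
      rw [hVP]
      omega
    exact ⟨⟨h1, h2⟩, (hx L (by simp [Finset.mem_Icc]; omega)).mpr hLP⟩

lemma pE_disjoint {P P' W : Finset ℕ} (hP : P ⊆ W) (hP' : P' ⊆ W) (hne : P ≠ P') :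
    Disjoint (pE T U P W) (pE T U P' W) := by
  rw [Set.disjoint_left]
  intro x h1 h2
  apply hne
  ext i
  constructor
  · intro hi; exact (h2 i (hP hi)).mp ((h1 i (hP hi)).mpr hi)
  · intro hi; exact (h1 i (hP' hi)).mp ((h2 i (hP' hi)).mpr hi)

lemma measure_Aev (hTm : Measurable T) (hU : MeasurableSet U) (L ℓ k : ℕ) (hk : k < ℓ) :
    μ (Aev T U L ℓ k) = ∑ P ∈ pS L ℓ k, μ (pE T U P (Finset.Icc 0 (2 * L))) := by
  rw [Aev_eq_biUnion L ℓ k hk]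
  apply measure_biUnion_finset
  · intro P hP P' hP' hne
    exact pE_disjoint (pS_mem (Finset.mem_coe.mp hP)).1 (pS_mem (Finset.mem_coe.mp hP')).1 hne
  · intro P _
    exact measurableSet_pE hTm hU _ _

/-- master anchored bound. -/
lemma measure_anch_le (hT : MeasurePreserving T μ μ) (hU : MeasurableSet U)
    (L j : ℕ) {R : Set Ω} (hR : MeasurableSet R) :
    μ (anch T U L j R) ≤ μ (U ∩ R) := by
  have hTm := hT.measurable
  set D := fun v => U ∩ {y | T^[L - v] y ∈ U ∧ visits T U y (L - v) = j} ∩ R with hD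
  have hDmeas : ∀ v, MeasurableSet (D v) := by
    intro v
    refine (hU.inter ?_).inter hR
    exact (meas_iter hTm hU _).inter
      ((measurable_visits hTm hU (L - v)) (MeasurableSet.of_discrete (s := {j})))
  have key : ∀ (y : Ω) (s s' : ℕ), s < s' → T^[s'] y ∈ U → visits T U y s = j →
      visits T U y s' = j → False := by
    intro y s s' hss hvis h1 h2
    have hsub : visits T U y s < visits T U y s' := by
      unfold visits
      apply Finset.card_lt_card
      rw [Finset.ssubset_iff_of_subset
        (Finset.filter_subset_filter _ (Finset.Icc_subset_Icc_right hss.le))]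
      refine ⟨s', ?_, ?_⟩
      · simp only [Finset.mem_filter, Finset.mem_Icc]; exact ⟨⟨by omega, le_refl _⟩, hvis⟩
      · simp only [Finset.mem_filter, Finset.mem_Icc]
        rintro ⟨⟨ha, hb⟩, _⟩; omega
    omega
  have h1 : μ (anch T U L j R) ≤ ∑ v ∈ Finset.range L, μ (T^[v] ⁻¹' D v) :=
    measure_biUnion_finset_le _ _
  have h2 : ∀ v, μ (T^[v] ⁻¹' D v) = μ (D v) := fun v =>
    (hT.iterate v).measure_preimage (hDmeas v).nullMeasurableSet
  have h3 : ∑ v ∈ Finset.range L, μ (D v) = μ (⋃ v ∈ Finset.range L, D v) := by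
    rw [measure_biUnion_finset ?_ (fun v _ => hDmeas v)]
    intro v hv v' hv' hne
    simp only [Finset.coe_range, Set.mem_Iio] at hv hv'
    rw [Function.onFun, Set.disjoint_left]
    rintro y ⟨⟨hyU, hyv1, hyv2⟩, _⟩ ⟨⟨_, hyv1', hyv2'⟩, _⟩
    rcases Nat.lt_or_ge (L - v) (L - v') with hlt | hge
    · exact key y _ _ hlt hyv1' hyv2 hyv2'
    · have hlt' : L - v' < L - v := by omega
      exact key y _ _ hlt' hyv1 hyv2' hyv2
  have h4 : μ (⋃ v ∈ Finset.range L, D v) ≤ μ (U ∩ R) := by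
    apply measure_mono
    apply Set.iUnion₂_subset
    intro v _
    rw [hD]
    exact fun y hy => ⟨hy.1.1, hy.2⟩
  calc μ (anch T U L j R) ≤ ∑ v ∈ Finset.range L, μ (T^[v] ⁻¹' D v) := h1
    _ = ∑ v ∈ Finset.range L, μ (D v) := by simp only [h2]
    _ = μ (⋃ v ∈ Finset.range L, D v) := h3
    _ ≤ μ (U ∩ R) := h4

/-- shift identity. -/
lemma measure_pE_shift (hT : MeasurePreserving T μ μ) (hTm : Measurable T)
    (hU : MeasurableSet U) (g : ℕ) (P W : Finset ℕ) :
    μ (pE T U (P.image (· + g)) (W.image (· + g))) = μ (pE T U P W) := by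
  have key : pE T U (P.image (· + g)) (W.image (· + g)) = T^[g] ⁻¹' pE T U P W := by
    ext x
    constructor
    · intro h i hi
      have h2 := h (i + g) (Finset.mem_image_of_mem _ hi)
      rw [Function.iterate_add_apply] at h2
      have hmem : (i + g) ∈ P.image (· + g) ↔ i ∈ P := by
        simp only [Finset.mem_image]
        constructor
        · rintro ⟨a, ha, hag⟩
          have : a = i := by omega
          rwa [← this]
        · intro hi; exact ⟨i, hi, rfl⟩
      rwa [hmem] at h2
    · intro h j hj
      rw [Finset.mem_image] at hj
      obtain ⟨i, hi, rfl⟩ := hj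
      have h2 := h i hi
      rw [Function.iterate_add_apply]
      have hmem : (i + g) ∈ P.image (· + g) ↔ i ∈ P := by
        simp only [Finset.mem_image]
        constructor
        · rintro ⟨a, ha, hag⟩
          have : a = i := by omega
          rwa [← this]
        · intro hi; exact ⟨i, hi, rfl⟩
      rwa [hmem]
  rw [key]
  exact (hT.iterate g).measure_preimage (measurableSet_pE hTm hU P W).nullMeasurableSet


lemma image_Icc_add (a b g : ℕ) : (Finset.Icc a b).image (· + g) = Finset.Icc (a + g) (b + g) := by
  ext i
  simp only [Finset.mem_image, Finset.mem_Icc]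
  constructor
  · rintro ⟨x, ⟨h1, h2⟩, rfl⟩
    omega
  · rintro ⟨h1, h2⟩
    exact ⟨i - g, ⟨by omega, by omega⟩, by omega⟩

lemma sum_pE_eq_measure (hTm : Measurable T) (hU : MeasurableSet U) {L ℓ k : ℕ}
    {s : Finset (Finset ℕ)} (hs : s ⊆ pS L ℓ k) :
    ∑ P ∈ s, μ (pE T U P (Finset.Icc 0 (2 * L)))
      = μ (⋃ P ∈ s, pE T U P (Finset.Icc 0 (2 * L))) := by
  rw [measure_biUnion_finset ?_ (fun P _ => measurableSet_pE hTm hU _ _)]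
  intro P hP P' hP' hne
  exact pE_disjoint (pS_mem (hs (Finset.mem_coe.mp hP))).1
    (pS_mem (hs (Finset.mem_coe.mp hP'))).1 hne

lemma sum_diff_core (hTm : Measurable T) (hU : MeasurableSet U) {L ℓ k : ℕ} (hk2 : k + 2 ≤ ℓ)
    (d : Finset ℕ → Set Ω)
    (hd : ∀ P ∈ core L ℓ k, d P ⊆ pE T U P (Finset.Icc (gp L P - L) (2 * L)))
    (hm : ∀ P ∈ core L ℓ k, MeasurableSet (d P)) :
    ∑ P ∈ core L ℓ k, μ (d P) = μ (⋃ P ∈ core L ℓ k, d P) := by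
  rw [measure_biUnion_finset ?_ (fun P hP => hm P hP)]
  intro P hP P' hP' hne
  rw [Function.onFun, Set.disjoint_left]
  intro x hx hx'
  exact hne (core_pE_unique hk2 (Finset.mem_coe.mp hP) (Finset.mem_coe.mp hP')
    (hd P (Finset.mem_coe.mp hP) hx) (hd P' (Finset.mem_coe.mp hP') hx'))

lemma adjacent_bound (hT : MeasurePreserving T μ μ) (hU : MeasurableSet U)
    {L ℓ k : ℕ} (hk2 : k + 2 ≤ ℓ) :
    ∃ M : ℝ≥0∞,
      (μ (Aev T U L ℓ k) ≤ M + μ (U ∩ Rset T U L (ℓ - 1)) ∧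
        M ≤ μ (Aev T U L ℓ k) + μ (U ∩ Rset T U L ℓ)) ∧
      (μ (Aev T U L ℓ (k + 1)) ≤ M + μ (U ∩ Rset T U L (ℓ - k - 1)) ∧
        M ≤ μ (Aev T U L ℓ (k + 1)) + μ (U ∩ Rset T U L (ℓ - k))) := by
  have hTm := hT.measurable
  set e1 := fun P => μ (pE T U P (Finset.Icc 0 (2 * L))) with he1
  set e2 := fun P => μ (pE T U P (Finset.Icc (gp L P - L) (2 * L))) with he2
  set e3 := fun P => μ (pE T U P (Finset.Icc (gp L P - L) (2 * L + (gp L P - L)))) with he3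
  set da := fun P => pE T U P (Finset.Icc (gp L P - L) (2 * L)) \ pE T U P (Finset.Icc 0 (2 * L))
    with hda
  set db := fun P => pE T U P (Finset.Icc (gp L P - L) (2 * L))
    \ pE T U P (Finset.Icc (gp L P - L) (2 * L + (gp L P - L))) with hdb
  -- a-side basics
  have hAk : μ (Aev T U L ℓ k) = ∑ P ∈ pS L ℓ k, e1 P := measure_Aev hTm hU _ _ _ (by omega)
  have hsplitA : ∑ P ∈ pS L ℓ k, e1 P
      = ∑ P ∈ core L ℓ k, e1 P
        + ∑ P ∈ (pS L ℓ k).filter (fun P => ¬ ∀ p ∈ P, gp L P ≤ p + L), e1 P := by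
    rw [core]
    exact (Finset.sum_filter_add_sum_filter_not _ _ _).symm
  have hbad1 : ∑ P ∈ (pS L ℓ k).filter (fun P => ¬ ∀ p ∈ P, gp L P ≤ p + L), e1 P
      ≤ μ (U ∩ Rset T U L (ℓ - 1)) := by
    rw [he1, sum_pE_eq_measure hTm hU (Finset.filter_subset _ _)]
    refine le_trans (measure_mono (Set.iUnion₂_subset fun P hP => ?_))
      (measure_anch_le hT hU L k (measurableSet_Rset hTm hU L (ℓ - 1)))
    rw [Finset.mem_filter] at hP
    exact incl_I1 hk2 hP.1 (fun hc => hP.2 (Finset.mem_filter.mp hc).2)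
  have hsub12 : ∀ P ∈ core L ℓ k, e1 P ≤ e2 P := by
    intro P hP
    apply measure_mono
    intro x hx i hi
    rw [Finset.mem_Icc] at hi
    exact hx i (Finset.mem_Icc.mpr ⟨by omega, hi.2⟩)
  have he2le : ∀ P ∈ core L ℓ k, e2 P ≤ e1 P + μ (da P) := by
    intro P hP
    refine le_trans (measure_le_inter_add_diff μ _ (pE T U P (Finset.Icc 0 (2 * L)))) ?_
    exact add_le_add_left (measure_mono Set.inter_subset_right) _
  have hdiffa : ∑ P ∈ core L ℓ k, μ (da P) ≤ μ (U ∩ Rset T U L ℓ) := by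
    rw [sum_diff_core hTm hU hk2 _ (fun P hP => Set.diff_subset)
      (fun P hP => (measurableSet_pE hTm hU _ _).diff (measurableSet_pE hTm hU _ _))]
    exact le_trans (measure_mono (Set.iUnion₂_subset fun P hP => incl_I3a hk2 hP))
      (measure_anch_le hT hU L (k + 1) (measurableSet_Rset hTm hU L ℓ))
  -- b-side basics
  have hAk1 : μ (Aev T U L ℓ (k + 1)) = ∑ S ∈ pS L ℓ (k + 1), e1 S :=
    measure_Aev hTm hU _ _ _ (by omega)
  have hsplitB : ∑ S ∈ pS L ℓ (k + 1), e1 S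
      = ∑ S ∈ good L ℓ k, e1 S
        + ∑ S ∈ (pS L ℓ (k + 1)).filter (fun S => ¬ ∀ s ∈ S, s + (L - mb L S) ≤ 2 * L), e1 S := by
    rw [good]
    exact (Finset.sum_filter_add_sum_filter_not _ _ _).symm
  have hbad2 : ∑ S ∈ (pS L ℓ (k + 1)).filter (fun S => ¬ ∀ s ∈ S, s + (L - mb L S) ≤ 2 * L), e1 S
      ≤ μ (U ∩ Rset T U L (ℓ - k - 1)) := by
    rw [he1, sum_pE_eq_measure hTm hU (Finset.filter_subset _ _)]
    refine le_trans (measure_mono (Set.iUnion₂_subset fun S hS => ?_))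
      (measure_anch_le hT hU L 1 (measurableSet_Rset hTm hU L (ℓ - k - 1)))
    rw [Finset.mem_filter] at hS
    exact incl_I2 hk2 hS.1 (fun hc => hS.2 (Finset.mem_filter.mp hc).2)
  have hgood_term : ∀ S ∈ good L ℓ k, e1 S = e3 (up L S) := by
    intro S hS
    have hup := (up_core hS hk2).2
    have hshift := measure_pE_shift (μ := μ) hT hTm hU (L - mb L S) S (Finset.Icc 0 (2 * L))
    rw [image_Icc_add, Nat.zero_add] at hshift
    show μ (pE T U S (Finset.Icc 0 (2 * L)))
      = μ (pE T U (up L S) (Finset.Icc (gp L (up L S) - L) (2 * L + (gp L (up L S) - L))))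
    rw [hup, show L + (L - mb L S) - L = L - mb L S from by omega]
    exact hshift.symm
  have hgoodsum : ∑ S ∈ good L ℓ k, e1 S = ∑ P ∈ core L ℓ k, e3 P := by
    rw [Finset.sum_congr rfl hgood_term]
    exact Finset.sum_nbij' (fun S => up L S) (fun P => down L P)
      (fun S hS => (up_core hS hk2).1) (fun P hP => (down_good hP hk2).1)
      (fun S hS => down_up hS hk2) (fun P hP => up_down hP hk2)
      (fun S hS => rfl)
  have hsub32 : ∀ P ∈ core L ℓ k, e3 P ≤ e2 P := by
    intro P hP
    apply measure_mono
    intro x hx i hi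
    rw [Finset.mem_Icc] at hi
    exact hx i (Finset.mem_Icc.mpr ⟨hi.1, by omega⟩)
  have he2le3 : ∀ P ∈ core L ℓ k, e2 P ≤ e3 P + μ (db P) := by
    intro P hP
    refine le_trans (measure_le_inter_add_diff μ _
      (pE T U P (Finset.Icc (gp L P - L) (2 * L + (gp L P - L))))) ?_
    exact add_le_add_left (measure_mono Set.inter_subset_right) _
  have hdiffb : ∑ P ∈ core L ℓ k, μ (db P) ≤ μ (U ∩ Rset T U L (ℓ - k)) := by
    rw [sum_diff_core hTm hU hk2 _ (fun P hP => Set.diff_subset)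
      (fun P hP => (measurableSet_pE hTm hU _ _).diff (measurableSet_pE hTm hU _ _))]
    refine le_trans (measure_mono (Set.iUnion₂_subset fun P hP => incl_I3b hk2 hP)) ?_
    rw [(hT.iterate L).measure_preimage
      (hU.inter (measurableSet_Rset hTm hU L (ℓ - k))).nullMeasurableSet]
  refine ⟨∑ P ∈ core L ℓ k, e2 P, ⟨?_, ?_⟩, ?_, ?_⟩
  · rw [hAk, hsplitA]
    exact add_le_add (Finset.sum_le_sum hsub12) hbad1
  · calc ∑ P ∈ core L ℓ k, e2 P ≤ ∑ P ∈ core L ℓ k, (e1 P + μ (da P)) :=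
          Finset.sum_le_sum he2le
      _ = ∑ P ∈ core L ℓ k, e1 P + ∑ P ∈ core L ℓ k, μ (da P) := Finset.sum_add_distrib
      _ ≤ μ (Aev T U L ℓ k) + μ (U ∩ Rset T U L ℓ) := by
          refine add_le_add ?_ hdiffa
          rw [hAk]
          exact Finset.sum_le_sum_of_subset (by rw [core]; exact Finset.filter_subset _ _)
  · rw [hAk1, hsplitB, hgoodsum]
    exact add_le_add (Finset.sum_le_sum hsub32) hbad2
  · calc ∑ P ∈ core L ℓ k, e2 P ≤ ∑ P ∈ core L ℓ k, (e3 P + μ (db P)) :=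
          Finset.sum_le_sum he2le3
      _ = ∑ P ∈ core L ℓ k, e3 P + ∑ P ∈ core L ℓ k, μ (db P) := Finset.sum_add_distrib
      _ ≤ μ (Aev T U L ℓ (k + 1)) + μ (U ∩ Rset T U L (ℓ - k)) := by
          refine add_le_add ?_ hdiffb
          rw [hAk1, hsplitB]
          exact le_add_right (le_of_eq hgoodsum.symm)

/-- large-`ℓ` bound. -/
lemma Aev_large_bound (hT : MeasurePreserving T μ μ) (hU : MeasurableSet U)
    {L ℓ k : ℕ} (hl : 1 ≤ ℓ) (hk : k < ℓ) :
    μ (Aev T U L ℓ k) ≤ μ (U ∩ {y | ℓ - 1 ≤ visits T U y (2 * L)}) := by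
  have hTm := hT.measurable
  have hRm : MeasurableSet {y | ℓ - 1 ≤ visits T U y (2 * L)} :=
    (measurable_visits hTm hU (2 * L)) (MeasurableSet.of_discrete (s := Set.Ici (ℓ - 1)))
  rcases Nat.eq_zero_or_pos k with rfl | hk1
  · rw [Aev_eq_biUnion L ℓ 0 hk]
    refine le_trans (measure_mono (Set.iUnion₂_subset fun P hP => incl_I4zero hl hP)) ?_
    rw [(hT.iterate L).measure_preimage]
    · refine measure_mono (fun y hy => ⟨hy.1, ?_⟩)
      have := hy.2
      simp only [Set.mem_setOf_eq] at this ⊢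
      exact le_trans this (visits_mono y (by omega))
    · refine (hU.inter ?_).nullMeasurableSet
      exact (measurable_visits hTm hU L) (MeasurableSet.of_discrete (s := Set.Ici (ℓ - 1)))
  · rw [Aev_eq_biUnion L ℓ k hk]
    refine le_trans (measure_mono (Set.iUnion₂_subset fun P hP => incl_I4 hl hk hk1 hP))
      (measure_anch_le hT hU L k hRm)


lemma abs_adjacent (hT : MeasurePreserving T μ μ) (hU : MeasurableSet U) {L ℓ k : ℕ}
    (hk2 : k + 2 ≤ ℓ) :
    |(μ (Aev T U L ℓ k)).toReal - (μ (Aev T U L ℓ (k + 1))).toReal|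
      ≤ (μ (U ∩ Rset T U L (ℓ - 1))).toReal + (μ (U ∩ Rset T U L ℓ)).toReal
        + (μ (U ∩ Rset T U L (ℓ - k - 1))).toReal + (μ (U ∩ Rset T U L (ℓ - k))).toReal := by
  obtain ⟨M, ⟨h1, h2⟩, h3, h4⟩ := adjacent_bound hT hU hk2
  have hMne : M ≠ ∞ := by
    refine ne_top_of_le_ne_top ?_ h2
    exact ENNReal.add_ne_top.mpr ⟨measure_ne_top _ _, measure_ne_top _ _⟩
  have tr : ∀ {a b c : ℝ≥0∞}, a ≤ b + c → b ≠ ∞ → c ≠ ∞ → a.toReal ≤ b.toReal + c.toReal := by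
    intro a b c hle hb hc
    rw [← ENNReal.toReal_add hb hc]
    exact ENNReal.toReal_mono (ENNReal.add_ne_top.mpr ⟨hb, hc⟩) hle
  have r1 := tr h1 hMne (measure_ne_top _ _)
  have r2 := tr h2 (measure_ne_top _ _) (measure_ne_top _ _)
  have r3 := tr h3 hMne (measure_ne_top _ _)
  have r4 := tr h4 (measure_ne_top _ _) (measure_ne_top _ _)
  have n1 : (0:ℝ) ≤ (μ (U ∩ Rset T U L (ℓ - 1))).toReal := ENNReal.toReal_nonneg
  have n2 : (0:ℝ) ≤ (μ (U ∩ Rset T U L ℓ)).toReal := ENNReal.toReal_nonneg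
  have n3 : (0:ℝ) ≤ (μ (U ∩ Rset T U L (ℓ - k - 1))).toReal := ENNReal.toReal_nonneg
  have n4 : (0:ℝ) ≤ (μ (U ∩ Rset T U L (ℓ - k))).toReal := ENNReal.toReal_nonneg
  rw [abs_sub_le_iff]
  constructor
  · linarith
  · linarith

lemma measure_inter_vis_toReal (hpos : 0 < μ U) (m t : ℕ) :
    (μ (U ∩ {y | m ≤ visits T U y t})).toReal
      = condProb μ U {x | tauIter T U m x ≤ (t : ℕ∞)} * (μ U).toReal := by
  have hset : {x : Ω | tauIter T U m x ≤ (t : ℕ∞)} = {y | m ≤ visits T U y t} := by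
    ext y; exact tauIter_le_iff m t y
  rw [condProb, hset, Set.inter_comm]
  rw [div_mul_cancel₀]
  exact ENNReal.toReal_ne_zero.mpr ⟨hpos.ne', measure_ne_top μ U⟩

lemma Rset_toReal (hTm : Measurable T) (hU : MeasurableSet U) (L m : ℕ) :
    (μ (U ∩ Rset T U L m)).toReal
      = (μ (U ∩ {y | m ≤ visits T U y (2 * L)})).toReal
        - (μ (U ∩ {y | m ≤ visits T U y L})).toReal := by
  have hsub : U ∩ {y | m ≤ visits T U y L} ⊆ U ∩ {y | m ≤ visits T U y (2 * L)} :=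
    fun y hy => ⟨hy.1, le_trans hy.2 (visits_mono y (by omega))⟩
  have hseteq : U ∩ Rset T U L m
      = (U ∩ {y | m ≤ visits T U y (2 * L)}) \ (U ∩ {y | m ≤ visits T U y L}) := by
    ext y
    simp only [Rset, Set.mem_inter_iff, Set.mem_setOf_eq, Set.mem_diff, not_and, not_le]
    constructor
    · rintro ⟨h1, h2, h3⟩; exact ⟨⟨h1, h3⟩, fun _ => h2⟩
    · rintro ⟨⟨h1, h3⟩, h2⟩; exact ⟨h1, h2 h1, h3⟩
  rw [hseteq, measure_diff hsub
    ((hU.inter ((measurable_visits hTm hU L) (MeasurableSet.of_discrete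
      (s := Set.Ici m)))).nullMeasurableSet) (measure_ne_top μ _)]
  exact ENNReal.toReal_sub_of_le (measure_mono hsub) (measure_ne_top μ _)

lemma condProb_nonneg (A : Set Ω) : 0 ≤ condProb μ U A :=
  div_nonneg ENNReal.toReal_nonneg ENNReal.toReal_nonneg

lemma condProb_mono {A B : Set Ω} (hAB : A ⊆ B) : condProb μ U A ≤ condProb μ U B := by
  unfold condProb
  have hle : (μ (A ∩ U)).toReal ≤ (μ (B ∩ U)).toReal :=
    ENNReal.toReal_mono (measure_ne_top μ _) (measure_mono (Set.inter_subset_inter_left U hAB))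
  gcongr

lemma telescope_abs {f : ℕ → ℝ} {B : ℝ} {ℓ : ℕ} (h : ∀ j, j + 2 ≤ ℓ → |f j - f (j + 1)| ≤ B) :
    ∀ d k, k + d + 1 ≤ ℓ → |f k - f (k + d)| ≤ d * B := by
  intro d
  induction d with
  | zero => intro k hk; simp
  | succ d ih =>
    intro k hk
    have h1 := ih k (by omega)
    have h2 := h (k + d) (by omega)
    calc |f k - f (k + (d + 1))|
        ≤ |f k - f (k + d)| + |f (k + d) - f (k + d + 1)| := by
          rw [show k + (d + 1) = k + d + 1 from by omega]
          exact abs_sub_le _ _ _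
      _ ≤ d * B + B := add_le_add h1 h2
      _ = (↑(d + 1) : ℝ) * B := by push_cast; ring

end Main

theorem stmt4 {Ω : Type*} [MeasurableSpace Ω]
    (μ : Measure Ω) [IsProbabilityMeasure μ] (T : Ω → Ω)
    (hT : MeasurePreserving T μ μ)
    (U : ℕ → Set Ω) (hUmeas : ∀ n, MeasurableSet (U n))
    (hnest : ∀ n, U (n + 1) ⊆ U n)
    (hpos : ∀ n, 0 < μ (U n))
    (hto0 : Tendsto (fun n => μ (U n)) atTop (𝓝 0))
    (hatαL : ℕ → ℕ → ℝ) (hatα : ℕ → ℝ) (L₁ : ℕ)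
    (hlimL : ∀ L ≥ L₁, ∀ ℓ ≥ 1,
      Tendsto (fun n => condProb μ (U n) {x | tauIter T (U n) (ℓ - 1) x ≤ (L : ℕ∞)})
        atTop (𝓝 (hatαL ℓ L)))
    (hlim : ∀ ℓ ≥ 1, Tendsto (fun L => hatαL ℓ L) atTop (𝓝 (hatα ℓ)))
    (hsum : Summable fun ℓ : ℕ => (ℓ : ℝ) * hatα ℓ) :
    ∀ η > (0 : ℝ), ∃ L₀ : ℕ, ∀ L ≥ L₀, ∃ N : ℕ, ∀ n ≥ N,
      ∀ ℓ ≥ 1, ∀ k < ℓ, ∀ k' < ℓ,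
        |(μ ({x | Zminus T (U n) L x = k} ∩ {x | Zplus T (U n) L x = ℓ - k} ∩
              T^[L] ⁻¹' U n)).toReal -
          (μ ({x | Zminus T (U n) L x = k'} ∩ {x | Zplus T (U n) L x = ℓ - k'} ∩
              T^[L] ⁻¹' U n)).toReal|
          ≤ η * (μ (U n)).toReal := by
  have hTm := hT.measurable
  intro η hη
  have hlimL' : ∀ t, L₁ ≤ t → ∀ m : ℕ,
      Tendsto (fun n => condProb μ (U n) {x | tauIter T (U n) m x ≤ (t : ℕ∞)})
        atTop (𝓝 (hatαL (m + 1) t)) := by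
    intro t ht m
    have := hlimL t ht (m + 1) (by omega)
    simpa using this
  have hsetmono_t : ∀ n m {t t' : ℕ}, t ≤ t' →
      condProb μ (U n) {x | tauIter T (U n) m x ≤ (t : ℕ∞)}
        ≤ condProb μ (U n) {x | tauIter T (U n) m x ≤ (t' : ℕ∞)} := by
    intro n m t t' htt
    apply condProb_mono
    intro x hx
    simp only [Set.mem_setOf_eq, tauIter_le_iff] at hx ⊢
    exact le_trans hx (visits_mono x htt)
  have hsetmono_m : ∀ (n t : ℕ) {m m' : ℕ}, m ≤ m' →
      condProb μ (U n) {x | tauIter T (U n) m' x ≤ (t : ℕ∞)}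
        ≤ condProb μ (U n) {x | tauIter T (U n) m x ≤ (t : ℕ∞)} := by
    intro n t m m' hmm
    apply condProb_mono
    intro x hx
    simp only [Set.mem_setOf_eq, tauIter_le_iff] at hx ⊢
    exact le_trans hmm hx
  have hatαL_mono : ∀ m {t t' : ℕ}, L₁ ≤ t → t ≤ t' → hatαL (m + 1) t ≤ hatαL (m + 1) t' := by
    intro m t t' ht htt
    exact le_of_tendsto_of_tendsto' (hlimL' t ht m) (hlimL' t' (le_trans ht htt) m)
      (fun n => hsetmono_t n m htt)
  have hatαL_le : ∀ m {t : ℕ}, L₁ ≤ t → hatαL (m + 1) t ≤ hatα (m + 1) := by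
    intro m t ht
    refine ge_of_tendsto (hlim (m + 1) (by omega)) ?_
    filter_upwards [eventually_ge_atTop t] with t' ht'
    exact hatαL_mono m ht ht'
  have hatα_to0 : Tendsto hatα atTop (𝓝 (0 : ℝ)) := by
    have h0 := hsum.tendsto_atTop_zero
    have h0abs : Tendsto (fun m : ℕ => |(m : ℝ) * hatα m|) atTop (𝓝 (0 : ℝ)) := by
      have := h0.abs
      simpa using this
    apply squeeze_zero_norm' ?_ h0abs
    filter_upwards [eventually_ge_atTop 1] with m hm
    rw [Real.norm_eq_abs, abs_mul, Nat.abs_cast]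
    have hm1 : (1 : ℝ) ≤ (m : ℝ) := by exact_mod_cast hm
    nlinarith [abs_nonneg (hatα m)]
  obtain ⟨ℓ0, hℓ0ge, hℓ0⟩ : ∃ ℓ0, 1 ≤ ℓ0 ∧ hatα (ℓ0 + 1) ≤ η / 8 := by
    obtain ⟨m0, hm0⟩ := (Metric.tendsto_atTop.mp hatα_to0) (η / 8) (by positivity)
    refine ⟨m0 + 1, by omega, ?_⟩
    have := hm0 (m0 + 2) (by omega)
    rw [Real.dist_eq, sub_zero] at this
    exact le_of_lt (lt_of_abs_lt this)
  set ε := η / (12 * ℓ0) with hε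
  have hℓ0c : (1 : ℝ) ≤ (ℓ0 : ℝ) := by exact_mod_cast hℓ0ge
  have hεpos : 0 < ε := by rw [hε]; positivity
  have hε12 : ε ≤ η / 12 := by
    rw [hε]
    apply div_le_div_of_nonneg_left hη.le (by norm_num)
    nlinarith
  have hLev : ∀ᶠ t in atTop, ∀ m ∈ Finset.Icc 1 ℓ0, |hatαL (m + 1) t - hatα (m + 1)| ≤ ε := by
    rw [eventually_all_finset]
    intro m hm
    rw [Finset.mem_Icc] at hm
    have h2 := Metric.tendsto_nhds.mp (hlim (m + 1) (by omega)) ε hεpos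
    filter_upwards [h2] with t ht
    rw [Real.dist_eq] at ht
    exact ht.le
  obtain ⟨L₀', hL₀'⟩ := eventually_atTop.mp hLev
  refine ⟨max L₀' (L₁ + 1), ?_⟩
  intro L hL
  have h1L : L₁ + 1 ≤ L := le_trans (le_max_right L₀' (L₁ + 1)) hL
  have hL1 : 1 ≤ L := by omega
  have hLL₁ : L₁ ≤ L := by omega
  have h2L₁ : L₁ ≤ 2 * L := by omega
  have hL₀'L : L₀' ≤ L := le_trans (le_max_left _ _) hL
  have hNev : ∀ᶠ n in atTop, ∀ m ∈ Finset.Icc 1 ℓ0,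
      |condProb μ (U n) {x | tauIter T (U n) m x ≤ (L : ℕ∞)} - hatαL (m + 1) L| ≤ ε ∧
      |condProb μ (U n) {x | tauIter T (U n) m x ≤ ((2 * L : ℕ) : ℕ∞)}
        - hatαL (m + 1) (2 * L)| ≤ ε := by
    rw [eventually_all_finset]
    intro m hm
    have hA := Metric.tendsto_nhds.mp (hlimL' L hLL₁ m) ε hεpos
    have hB := Metric.tendsto_nhds.mp (hlimL' (2 * L) h2L₁ m) ε hεpos
    filter_upwards [hA, hB] with n hn1 hn2
    rw [Real.dist_eq] at hn1 hn2
    exact ⟨hn1.le, hn2.le⟩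
  obtain ⟨N, hN⟩ := eventually_atTop.mp hNev
  refine ⟨N, ?_⟩
  intro n hn ℓ hℓ k hk k' hk'
  set V := U n with hV
  have hUm : MeasurableSet V := hUmeas n
  have hposU : 0 < μ V := hpos n
  have hμUr : 0 < (μ V).toReal := ENNReal.toReal_pos hposU.ne' (measure_ne_top μ V)
  have hq := hN n hn
  suffices hfin : |(μ (Aev T V L ℓ k)).toReal - (μ (Aev T V L ℓ k')).toReal|
      ≤ η * (μ V).toReal by exact hfin
  have key : ∀ m, 1 ≤ m → m ≤ ℓ0 →
      (μ (V ∩ Rset T V L m)).toReal ≤ 3 * ε * (μ V).toReal := by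
    intro m h1m hmℓ0
    obtain ⟨c1, c2⟩ := hq m (Finset.mem_Icc.mpr ⟨h1m, hmℓ0⟩)
    have hLb := hL₀' L hL₀'L m (Finset.mem_Icc.mpr ⟨h1m, hmℓ0⟩)
    have hle2L := hatαL_le m h2L₁
    rw [Rset_toReal hTm hUm L m, measure_inter_vis_toReal hposU m (2 * L),
      measure_inter_vis_toReal hposU m L, ← sub_mul]
    have hq3 : condProb μ V {x | tauIter T V m x ≤ ((2 * L : ℕ) : ℕ∞)}
        - condProb μ V {x | tauIter T V m x ≤ (L : ℕ∞)} ≤ 3 * ε := by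
      obtain ⟨d1, d2⟩ := abs_le.mp c1
      obtain ⟨d3, d4⟩ := abs_le.mp c2
      obtain ⟨d5, d6⟩ := abs_le.mp hLb
      linarith
    exact mul_le_mul_of_nonneg_right hq3 ENNReal.toReal_nonneg
  have main : ∀ a b : ℕ, a ≤ b → b < ℓ →
      |(μ (Aev T V L ℓ a)).toReal - (μ (Aev T V L ℓ b)).toReal| ≤ η * (μ V).toReal := by
    intro a b hab hbℓ
    rcases le_or_gt ℓ ℓ0 with hcase | hcase
    · have hstep : ∀ j, j + 2 ≤ ℓ →
          |(μ (Aev T V L ℓ j)).toReal - (μ (Aev T V L ℓ (j + 1))).toReal|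
            ≤ 12 * ε * (μ V).toReal := by
        intro j hj
        refine le_trans (abs_adjacent hT hUm hj) ?_
        have e1 := key (ℓ - 1) (by omega) (by omega)
        have e2 := key ℓ (by omega) (by omega)
        have e3 := key (ℓ - j - 1) (by omega) (by omega)
        have e4 := key (ℓ - j) (by omega) (by omega)
        linarith
      have htel := telescope_abs hstep (b - a) a (by omega)
      rw [show a + (b - a) = b from by omega] at htel
      refine le_trans htel ?_
      have hdle : ((b - a : ℕ) : ℝ) ≤ (ℓ0 : ℝ) := by exact_mod_cast (by omega : b - a ≤ ℓ0)
      have hstep_nonneg : (0 : ℝ) ≤ 12 * ε * (μ V).toReal := by positivity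
      calc ((b - a : ℕ) : ℝ) * (12 * ε * (μ V).toReal)
          ≤ (ℓ0 : ℝ) * (12 * ε * (μ V).toReal) := mul_le_mul_of_nonneg_right hdle hstep_nonneg
        _ = η * (μ V).toReal := by
            rw [hε]
            have : (ℓ0 : ℝ) ≠ 0 := by positivity
            field_simp
    · have hbound : ∀ j, j < ℓ →
          (μ (Aev T V L ℓ j)).toReal ≤ (η / 8 + ε) * (μ V).toReal := by
        intro j hj
        have h1 := Aev_large_bound (L := L) hT hUm (by omega) hj
        have h2 : (μ (Aev T V L ℓ j)).toReal
            ≤ (μ (V ∩ {y | ℓ - 1 ≤ visits T V y (2 * L)})).toReal :=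
          ENNReal.toReal_mono (measure_ne_top _ _) h1
        rw [measure_inter_vis_toReal hposU (ℓ - 1) (2 * L)] at h2
        have hm1 : condProb μ V {x | tauIter T V (ℓ - 1) x ≤ ((2 * L : ℕ) : ℕ∞)}
            ≤ condProb μ V {x | tauIter T V ℓ0 x ≤ ((2 * L : ℕ) : ℕ∞)} :=
          hsetmono_m n (2 * L) (by omega)
        obtain ⟨-, c2⟩ := hq ℓ0 (Finset.mem_Icc.mpr ⟨hℓ0ge, le_refl _⟩)
        obtain ⟨d3, d4⟩ := abs_le.mp c2
        have h4 := hatαL_le ℓ0 h2L₁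
        have h5 : condProb μ V {x | tauIter T V (ℓ - 1) x ≤ ((2 * L : ℕ) : ℕ∞)}
            ≤ η / 8 + ε := by linarith
        exact le_trans h2 (mul_le_mul_of_nonneg_right h5 ENNReal.toReal_nonneg)
      have ha := hbound a (by omega)
      have hb := hbound b hbℓ
      have hna : (0 : ℝ) ≤ (μ (Aev T V L ℓ a)).toReal := ENNReal.toReal_nonneg
      have hnb : (0 : ℝ) ≤ (μ (Aev T V L ℓ b)).toReal := ENNReal.toReal_nonneg
      have hc : 2 * (η / 8 + ε) * (μ V).toReal ≤ η * (μ V).toReal := by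
        have : 2 * (η / 8 + ε) ≤ η := by linarith
        exact mul_le_mul_of_nonneg_right this ENNReal.toReal_nonneg
      rw [abs_sub_le_iff]
      constructor
      · linarith
      · linarith
  rcases le_total k k' with hkk | hkk
  · exact main k k' hkk hk'
  · rw [abs_sub_comm]
    exact main k' k hkk hk
end

section
/- Let (U_n) be a nested sequence of measurable subsets of Ω with μ(U_n) > 0 for all n and μ(U_n) → 0. Assume that for all sufficiently large integers L the limits α̂_ℓ(L) = lim_{n→∞} μ_{U_n}(τ_{U_n}^{ℓ-1} ≤ L) exist for every ℓ ≥ 1, set α̂_ℓ = lim_{L→∞} α̂_ℓ(L), and assume α̂_ℓ → 0 as ℓ → ∞. Then lim_{L→∞} lim_{n→∞} μ({x ∈ Ω : τ_{U_n}(x) ≤ L}) / (L·μ(U_n)) = α_1, where α_1 = 1 − α̂_2. -/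
open MeasureTheory Filter Topology
open scoped Classical ENNReal

section aux
variable {Ω : Type*}

lemma visits_mono_s8 (T : Ω → Ω) (U : Set Ω) (x : Ω) : Monotone (visits T U x) := by
  intro a b hab
  exact Finset.card_le_card
    (Finset.filter_subset_filter _ (Finset.Icc_subset_Icc_right hab))

lemma one_le_visits_iff (T : Ω → Ω) (U : Set Ω) (x : Ω) (m : ℕ) :
    1 ≤ visits T U x m ↔ ∃ j, 1 ≤ j ∧ j ≤ m ∧ T^[j] x ∈ U := by
  unfold visits
  rw [show (1 : ℕ) ≤ _ ↔ 0 < _ from Iff.rfl, Finset.card_pos, Finset.filter_nonempty_iff]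
  simp [Finset.mem_Icc, and_assoc]

lemma tauIter_one_le_iff (T : Ω → Ω) (U : Set Ω) (x : Ω) (m : ℕ) :
    tauIter T U 1 x ≤ (m : ℕ∞) ↔ ∃ j, 1 ≤ j ∧ j ≤ m ∧ T^[j] x ∈ U := by
  constructor
  · intro h
    rw [← one_le_visits_iff]
    by_contra hc
    have hall : ∀ j ∈ {j : ℕ | 1 ≤ visits T U x j}, m < j := by
      intro j hj
      by_contra hjm
      push_neg at hjm
      exact hc (le_trans hj (visits_mono_s8 T U x hjm))
    have h2 : ((m : ℕ∞) + 1) ≤ tauIter T U 1 x := by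
      apply le_sInf
      rintro b ⟨j, hj, rfl⟩
      have := hall j hj
      show ((m : ℕ∞) + 1) ≤ (j : ℕ∞)
      have : (m + 1 : ℕ) ≤ j := Nat.succ_le_of_lt this
      exact_mod_cast this
    have h3 : ((m : ℕ∞) + 1) ≤ (m : ℕ∞) := le_trans h2 h
    have h4 : (m : ℕ∞) < (m : ℕ∞) + 1 := by
      exact_mod_cast Nat.lt_succ_self m
    exact absurd h3 (not_le.mpr h4)
  · rintro ⟨j, h1, h2, h3⟩
    have hm : 1 ≤ visits T U x m := (one_le_visits_iff T U x m).mpr ⟨j, h1, h2, h3⟩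
    exact sInf_le ⟨m, hm, rfl⟩

lemma measurableSet_tau_le [MeasurableSpace Ω] {T : Ω → Ω} (hTm : Measurable T)
    {U : Set Ω} (hU : MeasurableSet U) (m : ℕ) :
    MeasurableSet {x | tauIter T U 1 x ≤ (m : ℕ∞)} := by
  have he : {x | tauIter T U 1 x ≤ (m : ℕ∞)} = ⋃ j ∈ Finset.Icc 1 m, T^[j] ⁻¹' U := by
    ext x
    simp [tauIter_one_le_iff, Finset.mem_Icc, and_assoc]
  rw [he]
  exact (Finset.Icc 1 m).measurableSet_biUnion fun j _ => (hTm.iterate j) hU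

end aux

section key
variable {Ω : Type*} [MeasurableSpace Ω]

lemma key_identity (μ : Measure Ω) (T : Ω → Ω) (hT : MeasurePreserving T μ μ)
    (U : Set Ω) (hU : MeasurableSet U) (L : ℕ) :
    μ {x | tauIter T U 1 x ≤ (L : ℕ∞)} =
      ∑ k ∈ Finset.Icc 1 L,
        μ (U ∩ {y | tauIter T U 1 y ≤ ((L - k : ℕ) : ℕ∞)}ᶜ) := by
  set D : ℕ → Set Ω := fun m => U ∩ {y | tauIter T U 1 y ≤ ((m : ℕ) : ℕ∞)}ᶜ with hD
  set C : ℕ → Set Ω := fun k => T^[k] ⁻¹' (D (L - k)) with hC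
  have hDmeas : ∀ m, MeasurableSet (D m) := fun m =>
    hU.inter (measurableSet_tau_le hT.measurable hU m).compl
  have hCmem : ∀ k x, x ∈ C k ↔
      (T^[k] x ∈ U ∧ ¬ tauIter T U 1 (T^[k] x) ≤ ((L - k : ℕ) : ℕ∞)) := by
    intro k x; simp [hC, hD]
  -- union
  have hunion : {x | tauIter T U 1 x ≤ (L : ℕ∞)} = ⋃ k ∈ Finset.Icc 1 L, C k := by
    ext x
    simp only [Set.mem_setOf_eq, Set.mem_iUnion, exists_prop, Finset.mem_Icc]
    constructor
    · intro h
      have hne : ((Finset.Icc 1 L).filter fun i => T^[i] x ∈ U).Nonempty := by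
        obtain ⟨j, hj1, hj2, hj3⟩ := (tauIter_one_le_iff T U x L).mp h
        exact ⟨j, Finset.mem_filter.mpr ⟨Finset.mem_Icc.mpr ⟨hj1, hj2⟩, hj3⟩⟩
      set k := ((Finset.Icc 1 L).filter fun i => T^[i] x ∈ U).max' hne with hk
      have hkmem := ((Finset.Icc 1 L).filter fun i => T^[i] x ∈ U).max'_mem hne
      rw [Finset.mem_filter, Finset.mem_Icc] at hkmem
      refine ⟨k, ⟨hkmem.1.1, hkmem.1.2⟩, ?_⟩
      rw [hCmem]
      refine ⟨hkmem.2, ?_⟩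
      rw [tauIter_one_le_iff]
      rintro ⟨j, hj1, hj2, hj3⟩
      have hjk : j + k ≤ k := by
        apply Finset.le_max'
        rw [Finset.mem_filter, Finset.mem_Icc]
        refine ⟨⟨by omega, by omega⟩, ?_⟩
        rwa [Function.iterate_add_apply]
      omega
    · rintro ⟨k, ⟨hk1, hk2⟩, hx⟩
      rw [hCmem] at hx
      exact (tauIter_one_le_iff T U x L).mpr ⟨k, hk1, hk2, hx.1⟩
  -- disjointness
  have hdisj : (↑(Finset.Icc 1 L) : Set ℕ).PairwiseDisjoint C := by
    have haux : ∀ k k', 1 ≤ k → k' ≤ L → k < k' → ∀ x, x ∈ C k → x ∈ C k' → False := by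
      intro k k' _ hk'L hlt x hxk hxk'
      rw [hCmem] at hxk hxk'
      apply hxk.2
      rw [tauIter_one_le_iff]
      refine ⟨k' - k, by omega, by omega, ?_⟩
      rw [← Function.iterate_add_apply]
      have : k' - k + k = k' := by omega
      rw [this]
      exact hxk'.1
    intro a ha b hb hab
    simp only [Finset.coe_Icc, Set.mem_Icc] at ha hb
    rcases lt_or_gt_of_ne hab with h | h
    · exact Set.disjoint_left.mpr fun x hxa hxb => haux a b ha.1 hb.2 h x hxa hxb
    · exact Set.disjoint_right.mpr fun x hxa hxb => haux b a hb.1 ha.2 h x hxa hxb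
  have hCmeas : ∀ k ∈ Finset.Icc 1 L, MeasurableSet (C k) := fun k _ =>
    (hT.measurable.iterate k) (hDmeas (L - k))
  rw [hunion, measure_biUnion_finset hdisj hCmeas]
  refine Finset.sum_congr rfl fun k _ => ?_
  exact (hT.iterate k).measure_preimage (hDmeas (L - k)).nullMeasurableSet

end key

section ratio
variable {Ω : Type*} [MeasurableSpace Ω]

lemma ratio_eq (μ : Measure Ω) [IsProbabilityMeasure μ] (T : Ω → Ω)
    (hT : MeasurePreserving T μ μ) (U : Set Ω) (hU : MeasurableSet U)
    (hpos : 0 < μ U) (L : ℕ) (hL : 1 ≤ L) :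
    (μ {x | tauIter T U 1 x ≤ (L : ℕ∞)}).toReal / ((L : ℝ) * (μ U).toReal) =
      1 - (∑ m ∈ Finset.range L,
        condProb μ U {x | tauIter T U 1 x ≤ (m : ℕ∞)}) / L := by
  set c : ℝ := (μ U).toReal with hc
  have hc0 : 0 < c := ENNReal.toReal_pos hpos.ne' (measure_ne_top μ U)
  set b : ℕ → ℝ := fun m => (μ (U ∩ {x | tauIter T U 1 x ≤ (m : ℕ∞)})).toReal with hb
  -- toReal of key identity
  have h1 : (μ {x | tauIter T U 1 x ≤ (L : ℕ∞)}).toReal =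
      ∑ k ∈ Finset.Icc 1 L, (c - b (L - k)) := by
    rw [key_identity μ T hT U hU L, ENNReal.toReal_sum (fun k _ => measure_ne_top _ _)]
    refine Finset.sum_congr rfl fun k _ => ?_
    have hsplit : μ (U ∩ {x | tauIter T U 1 x ≤ ((L - k : ℕ) : ℕ∞)}ᶜ) +
        μ (U ∩ {x | tauIter T U 1 x ≤ ((L - k : ℕ) : ℕ∞)}) = μ U := by
      rw [add_comm, ← Set.diff_eq]
      exact measure_inter_add_diff U (measurableSet_tau_le hT.measurable hU (L - k))
    have := congrArg ENNReal.toReal hsplit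
    rw [ENNReal.toReal_add (measure_ne_top _ _) (measure_ne_top _ _)] at this
    simp only [hb]
    linarith [this]
  -- reindex
  have h2 : ∑ k ∈ Finset.Icc 1 L, (c - b (L - k)) =
      ∑ m ∈ Finset.range L, (c - b m) := by
    refine Finset.sum_nbij' (fun k => L - k) (fun m => L - m) ?_ ?_ ?_ ?_ ?_
    · intro k hk; rw [Finset.mem_Icc] at hk; rw [Finset.mem_range]; omega
    · intro m hm; rw [Finset.mem_range] at hm; rw [Finset.mem_Icc]; omega
    · intro k hk; rw [Finset.mem_Icc] at hk; omega
    · intro m hm; rw [Finset.mem_range] at hm; omega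
    · intro k _; rfl
  have hbc : ∀ m, b m = condProb μ U {x | tauIter T U 1 x ≤ (m : ℕ∞)} * c := by
    intro m
    rw [condProb, Set.inter_comm]
    field_simp [hb]
    exact (mul_div_cancel_right₀ _ hc0.ne').symm
  rw [h1, h2]
  rw [Finset.sum_sub_distrib, Finset.sum_const, Finset.card_range]
  have : ∑ m ∈ Finset.range L, b m =
      (∑ m ∈ Finset.range L, condProb μ U {x | tauIter T U 1 x ≤ (m : ℕ∞)}) * c := by
    rw [Finset.sum_mul]; exact Finset.sum_congr rfl fun m _ => hbc m
  rw [this]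
  have hL0 : (0 : ℝ) < L := by exact_mod_cast hL
  field_simp
  ring
end ratio

theorem stmt8 {Ω : Type*} [MeasurableSpace Ω]
    (μ : Measure Ω) [IsProbabilityMeasure μ] (T : Ω → Ω)
    (hT : MeasurePreserving T μ μ)
    (U : ℕ → Set Ω) (hUmeas : ∀ n, MeasurableSet (U n))
    (hnest : ∀ n, U (n + 1) ⊆ U n)
    (hpos : ∀ n, 0 < μ (U n))
    (hto0 : Tendsto (fun n => μ (U n)) atTop (𝓝 0))
    (hatαL : ℕ → ℕ → ℝ) (hatα : ℕ → ℝ) (L₁ : ℕ)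
    (hlimL : ∀ L ≥ L₁, ∀ ℓ ≥ 1,
      Tendsto (fun n => condProb μ (U n) {x | tauIter T (U n) (ℓ - 1) x ≤ (L : ℕ∞)})
        atTop (𝓝 (hatαL ℓ L)))
    (hlim : ∀ ℓ ≥ 1, Tendsto (fun L => hatαL ℓ L) atTop (𝓝 (hatα ℓ)))
    (hdecay : Tendsto hatα atTop (𝓝 0)) :
    ∀ ε > (0 : ℝ), ∃ L₀ : ℕ, ∀ L ≥ L₀, ∃ N : ℕ, ∀ n ≥ N,
      |(μ {x | tauIter T (U n) 1 x ≤ (L : ℕ∞)}).toReal / ((L : ℝ) * (μ (U n)).toReal) -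
        (1 - hatα 2)| ≤ ε := by
  intro ε hε
  set α := hatα 2 with hαdef
  have hcp01 : ∀ n (A : Set Ω), 0 ≤ condProb μ (U n) A ∧ condProb μ (U n) A ≤ 1 := by
    intro n A
    have hc0 : 0 < (μ (U n)).toReal :=
      ENNReal.toReal_pos (hpos n).ne' (measure_ne_top μ _)
    refine ⟨div_nonneg ENNReal.toReal_nonneg ENNReal.toReal_nonneg, ?_⟩
    rw [condProb, div_le_one hc0]
    exact ENNReal.toReal_mono (measure_ne_top μ _) (measure_mono Set.inter_subset_right)
  have hαL01 : ∀ m, L₁ ≤ m → 0 ≤ hatαL 2 m ∧ hatαL 2 m ≤ 1 := by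
    intro m hm
    have h := hlimL m hm 2 (by norm_num)
    exact ⟨ge_of_tendsto' h fun n => (hcp01 n _).1,
      le_of_tendsto' h fun n => (hcp01 n _).2⟩
  have hα01 : 0 ≤ α ∧ α ≤ 1 := by
    have h := hlim 2 (by norm_num)
    exact ⟨ge_of_tendsto h (eventually_atTop.mpr ⟨L₁, fun m hm => (hαL01 m hm).1⟩),
      le_of_tendsto h (eventually_atTop.mpr ⟨L₁, fun m hm => (hαL01 m hm).2⟩)⟩
  obtain ⟨L₂, hL₂⟩ := Metric.tendsto_atTop.mp (hlim 2 (by norm_num)) (ε / 4) (by positivity)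
  set M := max L₁ L₂ with hMdef
  refine ⟨max (M + 1) ⌈2 * (M : ℝ) / ε⌉₊, fun L hL => ?_⟩
  have hML : M < L := lt_of_lt_of_le (Nat.lt_succ_self M) (le_trans (le_max_left _ _) hL)
  have hL1 : 1 ≤ L := by omega
  have hLpos : (0 : ℝ) < L := by exact_mod_cast hL1
  have hMLε : (M : ℝ) / L ≤ ε / 2 := by
    rw [div_le_iff₀ hLpos]
    have h1 : 2 * (M : ℝ) / ε ≤ (⌈2 * (M : ℝ) / ε⌉₊ : ℝ) := Nat.le_ceil _
    have h2 : ((⌈2 * (M : ℝ) / ε⌉₊ : ℕ) : ℝ) ≤ (L : ℝ) := by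
      exact_mod_cast le_trans (le_max_right (M + 1) _) hL
    have h3 : 2 * (M : ℝ) / ε ≤ (L : ℝ) := le_trans h1 h2
    rw [div_le_iff₀ hε] at h3
    nlinarith
  have hev : ∀ᶠ n in atTop, ∀ m ∈ Finset.Ico M L,
      |condProb μ (U n) {x | tauIter T (U n) 1 x ≤ (m : ℕ∞)} - hatαL 2 m| ≤ ε / 4 := by
    rw [Finset.eventually_all]
    intro m hm
    rw [Finset.mem_Ico] at hm
    have h := hlimL m (le_trans (le_max_left _ _) hm.1) 2 (by norm_num)
    obtain ⟨N, hN⟩ := Metric.tendsto_atTop.mp h (ε / 4) (by positivity)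
    refine eventually_atTop.mpr ⟨N, fun n hn => ?_⟩
    have := hN n hn
    rw [Real.dist_eq] at this
    exact le_of_lt this
  obtain ⟨N, hN⟩ := eventually_atTop.mp hev
  refine ⟨N, fun n hn => ?_⟩
  set a : ℕ → ℝ := fun m => condProb μ (U n) {x | tauIter T (U n) 1 x ≤ (m : ℕ∞)} with ha
  rw [ratio_eq μ T hT (U n) (hUmeas n) (hpos n) L hL1]
  have hkey : 1 - (∑ m ∈ Finset.range L, a m) / L - (1 - α) =
      -((∑ m ∈ Finset.range L, (a m - α)) / L) := by
    rw [Finset.sum_sub_distrib, Finset.sum_const, Finset.card_range, nsmul_eq_mul]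
    field_simp
    ring
  rw [hkey, abs_neg]
  have hterm : ∀ m ∈ Finset.Ico M L, |a m - α| ≤ ε / 2 := by
    intro m hm
    have hm' := Finset.mem_Ico.mp hm
    have h1 : |a m - hatαL 2 m| ≤ ε / 4 := hN n hn m hm
    have h2 : |hatαL 2 m - α| ≤ ε / 4 := by
      have := hL₂ m (le_trans (le_max_right L₁ L₂) hm'.1)
      rw [Real.dist_eq] at this
      exact le_of_lt this
    calc |a m - α| ≤ |a m - hatαL 2 m| + |hatαL 2 m - α| := abs_sub_le _ _ _
    _ ≤ ε / 4 + ε / 4 := add_le_add h1 h2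
    _ = ε / 2 := by ring
  have hterm1 : ∀ m ∈ Finset.Ico 0 M, |a m - α| ≤ 1 := by
    intro m _
    have h1 := hcp01 n {x | tauIter T (U n) 1 x ≤ (m : ℕ∞)}
    rw [abs_sub_le_iff]
    constructor <;> [linarith [h1.1, h1.2, hα01.1, hα01.2]; linarith [h1.1, h1.2, hα01.1, hα01.2]]
  have hsum : ∑ m ∈ Finset.range L, |a m - α| ≤ (M : ℝ) + (L : ℝ) * (ε / 2) := by
    rw [Finset.range_eq_Ico, ← Finset.sum_Ico_consecutive _ (Nat.zero_le M) (le_of_lt hML)]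
    have b1 : ∑ m ∈ Finset.Ico 0 M, |a m - α| ≤ (M : ℝ) := by
      calc ∑ m ∈ Finset.Ico 0 M, |a m - α| ≤ (Finset.Ico 0 M).card • (1 : ℝ) :=
            Finset.sum_le_card_nsmul _ _ _ hterm1
      _ = (M : ℝ) := by simp
    have b2 : ∑ m ∈ Finset.Ico M L, |a m - α| ≤ (L : ℝ) * (ε / 2) := by
      calc ∑ m ∈ Finset.Ico M L, |a m - α| ≤ (Finset.Ico M L).card • (ε / 2) :=
            Finset.sum_le_card_nsmul _ _ _ hterm
      _ = ((L - M : ℕ) : ℝ) * (ε / 2) := by rw [Nat.card_Ico, nsmul_eq_mul]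
      _ ≤ (L : ℝ) * (ε / 2) := by
            have : ((L - M : ℕ) : ℝ) ≤ (L : ℝ) := by exact_mod_cast Nat.sub_le L M
            nlinarith
    linarith
  calc |(∑ m ∈ Finset.range L, (a m - α)) / L|
      = |∑ m ∈ Finset.range L, (a m - α)| / L := by rw [abs_div, abs_of_pos hLpos]
    _ ≤ (∑ m ∈ Finset.range L, |a m - α|) / L := by
        gcongr
        exact Finset.abs_sum_le_sum_abs _ _
    _ ≤ ((M : ℝ) + (L : ℝ) * (ε / 2)) / L := by gcongr
    _ = (M : ℝ) / L + ε / 2 := by field_simp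
    _ ≤ ε / 2 + ε / 2 := by linarith
    _ = ε := by ring
end
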